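/- arXiv:1702.02060 — 9 statements merged into one kernel-verified Lean document; each statement's English description precedes it below -/
import Mathlib

section
/- For every integer k ≥ 1, the rank number of the path P_{2^k−1} equals k, and the standard ranking is the unique k-ranking of P_{2^k−1}. -/
open SimpleGraph

/-- `f` is a `k`-ranking of `G`: labels lie in `{1,…,k}` and whenever two distinct
vertices get the same label, every path connecting them contains a vertex of
strictly larger label. -/
def IsRanking {V : Type*} (G : SimpleGraph V) (k : ℕ) (f : V → ℕ) : Prop :=
  (∀ v, 1 ≤ f v ∧ f v ≤ k) ∧
  ∀ u v, u ≠ v → f u = f v → ∀ p : G.Walk u v, p.IsPath → ∃ w ∈ p.support, f u < f w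

/-- The rank number `χᵣ(G)`: the least `k` such that `G` admits a `k`-ranking. -/
noncomputable def rankNumber {V : Type*} (G : SimpleGraph V) : ℕ :=
  sInf {k | ∃ f : V → ℕ, IsRanking G k f}

/-- The path `P_n` on vertices `v_1, …, v_n` (vertex `vᵢ` is the natural number `i`),
with edges `vᵢ v_{i+1}` for `1 ≤ i ≤ n - 1`. -/
def pathG (n : ℕ) : SimpleGraph ℕ :=
  SimpleGraph.fromRel (fun a b => 1 ≤ a ∧ b = a + 1 ∧ b ≤ n)

/-- The label of `vᵢ` in the standard ranking of a path: `α + 1` where `2^α` is the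
largest power of `2` dividing `i`. -/
def standardLabel (i : ℕ) : ℕ := padicValNat 2 i + 1

lemma pathG_adj {n a b : ℕ} (h : (pathG n).Adj a b) :
    (b = a + 1 ∨ a = b + 1) ∧ 1 ≤ a ∧ a ≤ n ∧ 1 ≤ b ∧ b ≤ n := by
  rw [pathG, fromRel_adj] at h
  omega

lemma mem_support_of_between {n u v : ℕ} (p : (pathG n).Walk u v) :
    ∀ m, min u v ≤ m → m ≤ max u v → m ∈ p.support := by
  induction p with
  | nil =>
    intro m h1 h2
    simp only [Walk.support_nil, List.mem_singleton]
    omega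
  | @cons u b v h q ih =>
    intro m h1 h2
    rw [Walk.support_cons, List.mem_cons]
    rcases eq_or_ne m u with rfl | hm
    · exact Or.inl rfl
    · refine Or.inr (ih m ?_ ?_) <;>
      · have := pathG_adj h
        have hv : min b v ≤ v ∧ v ≤ max b v := ⟨min_le_right _ _, le_max_right _ _⟩
        omega

lemma exists_straight {n : ℕ} : ∀ (d a : ℕ), 1 ≤ a → a + d ≤ n →
    ∃ p : (pathG n).Walk a (a + d), p.IsPath ∧ ∀ w ∈ p.support, a ≤ w ∧ w ≤ a + d := by
  intro d
  induction d with
  | zero =>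
    intro a _ _
    exact ⟨Walk.nil, by simp, by simp⟩
  | succ d ih =>
    intro a ha h
    obtain ⟨p, hp, hs⟩ := ih (a + 1) (by omega) (by omega)
    have hadj : (pathG n).Adj a (a + 1) := by
      rw [pathG, fromRel_adj]
      exact ⟨by omega, Or.inl ⟨ha, rfl, by omega⟩⟩
    refine ⟨(Walk.cons hadj p).copy rfl (by omega), ?_, ?_⟩
    · rw [Walk.isPath_copy, Walk.cons_isPath_iff]
      refine ⟨hp, fun hmem => ?_⟩
      have := hs a hmem; omega
    · intro w hw
      rw [Walk.support_copy, Walk.support_cons, List.mem_cons] at hw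
      rcases hw with rfl | hw
      · omega
      · have := hs w hw; omega

lemma walk_start {n u v : ℕ} (p : (pathG n).Walk u v) (huv : u ≠ v) :
    1 ≤ u ∧ u ≤ n := by
  cases p with
  | nil => exact absurd rfl huv
  | cons h q => have := pathG_adj h; omega

lemma walk_endpoints {n u v : ℕ} (p : (pathG n).Walk u v) (huv : u ≠ v) :
    1 ≤ u ∧ u ≤ n ∧ 1 ≤ v ∧ v ≤ n := by
  have h1 := walk_start p huv
  have h2 := walk_start p.reverse huv.symm
  exact ⟨h1.1, h1.2, h2.1, h2.2⟩

lemma padic_eq_of {x α : ℕ} (hx : x ≠ 0) (h1 : 2 ^ α ∣ x) (h2 : ¬ 2 ^ (α + 1) ∣ x) :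
    padicValNat 2 x = α := by
  haveI : Fact (Nat.Prime 2) := ⟨Nat.prime_two⟩
  have hle : α ≤ padicValNat 2 x := by
    rcases (padicValNat_dvd_iff α x).mp h1 with h | h
    · exact absurd h hx
    · exact h
  by_contra hne
  have hlt : α + 1 ≤ padicValNat 2 x := by omega
  exact h2 ((padicValNat_dvd_iff (α+1) x).mpr (Or.inr hlt))

lemma standardLabel_le {i k : ℕ} (hi : 1 ≤ i) (hik : i ≤ 2 ^ k - 1) :
    standardLabel i ≤ k := by
  have h1 : 2 ^ padicValNat 2 i ≤ i := Nat.le_of_dvd (by omega) pow_padicValNat_dvd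
  have h2 : 2 ^ padicValNat 2 i < 2 ^ k := by
    have : (1:ℕ) ≤ 2 ^ k := Nat.one_le_two_pow
    omega
  have := (Nat.pow_lt_pow_iff_right (by norm_num : 1 < 2)).mp h2
  unfold standardLabel; omega

-- key divisibility step: between two numbers with equal 2-adic valuation there is one bigger
lemma exists_bigger_val {u v : ℕ} (hu : 1 ≤ u) (huv : u < v)
    (hval : padicValNat 2 u = padicValNat 2 v) :
    ∃ w, u < w ∧ w ≤ v ∧ padicValNat 2 u < padicValNat 2 w := by
  haveI : Fact (Nat.Prime 2) := ⟨Nat.prime_two⟩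
  obtain ⟨α, hα⟩ : ∃ α, padicValNat 2 u = α := ⟨_, rfl⟩
  obtain ⟨s, hs⟩ : 2 ^ α ∣ u := hα ▸ pow_padicValNat_dvd
  obtain ⟨t, ht⟩ : 2 ^ α ∣ v := hα ▸ hval ▸ pow_padicValNat_dvd
  have hsodd : ¬ 2 ∣ s := by
    rintro ⟨c, hc⟩
    refine pow_succ_padicValNat_not_dvd (p := 2) (by omega : u ≠ 0) ⟨c, ?_⟩
    rw [hα, hs, hc]; ring
  have htodd : ¬ 2 ∣ t := by
    rintro ⟨c, hc⟩
    refine pow_succ_padicValNat_not_dvd (p := 2) (by omega : v ≠ 0) ⟨c, ?_⟩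
    rw [← hval, hα, ht, hc]; ring
  have hpow : (1:ℕ) ≤ 2 ^ α := Nat.one_le_two_pow
  have hst : s < t := by
    by_contra hc
    push_neg at hc
    have : 2 ^ α * t ≤ 2 ^ α * s := Nat.mul_le_mul_left _ hc
    omega
  refine ⟨2 ^ α * (s + 1), ?_, ?_, ?_⟩
  · have : 2 ^ α * s < 2 ^ α * (s + 1) := by
      rw [Nat.mul_add, Nat.mul_one]; omega
    omega
  · have : 2 ^ α * (s + 1) ≤ 2 ^ α * t := Nat.mul_le_mul_left _ (by omega)
    omega
  · have heven : 2 ∣ s + 1 := by omega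
    obtain ⟨c, hc⟩ := heven
    have hdvd : 2 ^ (α + 1) ∣ 2 ^ α * (s + 1) := ⟨c, by rw [hc]; ring⟩
    have hne : 2 ^ α * (s + 1) ≠ 0 := by positivity
    rcases (padicValNat_dvd_iff (α+1) _).mp hdvd with h | h
    · exact absurd h hne
    · omega

lemma padic_shift {m j : ℕ} (hm : 1 ≤ m) (hmj : m < 2 ^ j) :
    padicValNat 2 (m + 2 ^ j) = padicValNat 2 m := by
  haveI : Fact (Nat.Prime 2) := ⟨Nat.prime_two⟩
  obtain ⟨α, hα⟩ : ∃ α, padicValNat 2 m = α := ⟨_, rfl⟩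
  have h1 : 2 ^ α ∣ m := hα ▸ pow_padicValNat_dvd
  have hαj : α < j := by
    have h2 : 2 ^ α ≤ m := Nat.le_of_dvd (by omega) h1
    by_contra hc
    push_neg at hc
    have : 2 ^ j ≤ 2 ^ α := Nat.pow_le_pow_right (by norm_num) hc
    omega
  rw [hα]
  refine padic_eq_of (by positivity) (Nat.dvd_add h1 (pow_dvd_pow 2 (by omega))) ?_
  intro hdvd
  have h3 : 2 ^ (α + 1) ∣ 2 ^ j := pow_dvd_pow 2 (by omega)
  have h4 : 2 ^ (α + 1) ∣ m := by
    have := Nat.dvd_sub hdvd h3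
    simpa using this
  exact pow_succ_padicValNat_not_dvd (by omega : m ≠ 0) (hα ▸ h4)

/-- Any valid separating labeling restricted to an interval of `2^k` consecutive
vertices of `P_n` has a label `≥ k + 1` somewhere in that interval. -/
lemma lower_bound {n : ℕ} {f : ℕ → ℕ}
    (hf1 : ∀ v, 1 ≤ f v)
    (hsep : ∀ u v, u ≠ v → f u = f v → ∀ p : (pathG n).Walk u v, p.IsPath →
      ∃ w ∈ p.support, f u < f w) :
    ∀ k a, 1 ≤ a → a + 2 ^ k - 1 ≤ n →
      ∃ i, a ≤ i ∧ i ≤ a + 2 ^ k - 1 ∧ k + 1 ≤ f i := by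
  intro k
  induction k with
  | zero => intro a ha hn; exact ⟨a, le_refl a, by omega, hf1 a⟩
  | succ k ih =>
    intro a ha hn
    have hpk : (1:ℕ) ≤ 2 ^ k := Nat.one_le_two_pow
    have hp2 : 2 ^ (k+1) = 2 ^ k + 2 ^ k := by rw [pow_succ]; omega
    obtain ⟨i, hi1, hi2, hi3⟩ := ih a ha (by omega)
    obtain ⟨j, hj1, hj2, hj3⟩ := ih (a + 2 ^ k) (by omega) (by omega)
    have hij : i < j := by omega
    by_cases heq : f i = f j
    · obtain ⟨p, hp, hs⟩ := exists_straight (n := n) (j - i) i (by omega) (by omega)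
      have hji : i + (j - i) = j := by omega
      obtain ⟨w, hw, hfw⟩ := hsep i j (by omega) heq (p.copy rfl hji)
        (by rwa [Walk.isPath_copy])
      rw [Walk.support_copy] at hw
      have := hs w hw
      exact ⟨w, by omega, by omega, by omega⟩
    · rcases Nat.lt_or_ge (f i) (k + 2) with h | h
      · exact ⟨j, by omega, by omega, by omega⟩
      · exact ⟨i, by omega, by omega, by omega⟩

/-- Uniqueness: on an interval of `2^k - 1` consecutive vertices, a labeling bounded
by `k` must be the (shifted) standard ranking. -/
lemma unique_lemma {n : ℕ} {f : ℕ → ℕ}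
    (hf1 : ∀ v, 1 ≤ f v)
    (hsep : ∀ u v, u ≠ v → f u = f v → ∀ p : (pathG n).Walk u v, p.IsPath →
      ∃ w ∈ p.support, f u < f w) :
    ∀ k, 1 ≤ k → ∀ a, 1 ≤ a → a + 2 ^ k - 2 ≤ n →
    (∀ i, a ≤ i → i ≤ a + 2 ^ k - 2 → f i ≤ k) →
    ∀ i, a ≤ i → i ≤ a + 2 ^ k - 2 → f i = standardLabel (i - a + 1) := by
  intro k hk
  induction k, hk using Nat.le_induction with
  | base =>
    intro a ha hn hbound i h1 h2
    have h3 : i = a := by omega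
    have h4 := hf1 i
    have h5 := hbound i h1 h2
    have : standardLabel (i - a + 1) = 1 := by
      rw [h3]
      simp [standardLabel]
    omega
  | succ k hk IH =>
    intro a ha hn hbound
    have hpk : (1:ℕ) ≤ 2 ^ k := Nat.one_le_two_pow
    have hp2 : 2 ^ (k+1) = 2 ^ k + 2 ^ k := by rw [pow_succ]; omega
    -- helper: two equal labels in the interval force a strictly bigger label in between
    have contra : ∀ x y, a ≤ x → y ≤ a + 2 ^ (k+1) - 2 → x < y → f x = f y →
        ∃ w, a ≤ w ∧ w ≤ a + 2 ^ (k+1) - 2 ∧ f x < f w := by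
      intro x y hx hy hxy heq
      obtain ⟨p, hp, hs⟩ := exists_straight (n := n) (y - x) x (by omega) (by omega)
      have hyx : x + (y - x) = y := by omega
      obtain ⟨w, hw, hfw⟩ := hsep x y (by omega) heq (p.copy rfl hyx)
        (by rwa [Walk.isPath_copy])
      rw [Walk.support_copy] at hw
      have := hs w hw
      exact ⟨w, by omega, by omega, hfw⟩
    -- the maximal label k+1 occurs
    obtain ⟨P, hP1, hP2, hP3⟩ := lower_bound hf1 hsep k a ha (by omega)
    have hPb : P ≤ a + 2 ^ (k+1) - 2 := by omega
    have hfP : f P = k + 1 := by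
      have := hbound P (by omega) hPb; omega
    -- uniqueness of the maximal label
    have huniq : ∀ q, a ≤ q → q ≤ a + 2 ^ (k+1) - 2 → f q = k + 1 → q = P := by
      intro q hq1 hq2 hq3
      by_contra hne
      rcases lt_or_gt_of_ne hne with h | h
      · obtain ⟨w, hw1, hw2, hw3⟩ := contra q P hq1 hPb h (by omega)
        have := hbound w hw1 hw2; omega
      · obtain ⟨w, hw1, hw2, hw3⟩ := contra P q (by omega) hq2 h (by omega)
        have := hbound w hw1 hw2; omega
    -- P must be the midpoint
    have hleft : P - a ≤ 2 ^ k - 1 := by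
      by_contra hc
      push_neg at hc
      obtain ⟨i, hi1, hi2, hi3⟩ := lower_bound hf1 hsep k a ha (by omega)
      have hik : f i = k + 1 := by
        have := hbound i hi1 (by omega); omega
      have := huniq i hi1 (by omega) hik
      omega
    have hright : (a + 2 ^ (k+1) - 2) - P ≤ 2 ^ k - 1 := by
      by_contra hc
      push_neg at hc
      obtain ⟨i, hi1, hi2, hi3⟩ := lower_bound hf1 hsep k (P + 1) (by omega) (by omega)
      have hik : f i = k + 1 := by
        have := hbound i (by omega) (by omega); omega
      have := huniq i (by omega) (by omega) hik
      omega
    have hPmid : P = a + 2 ^ k - 1 := by omega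
    -- side bounds
    have hbl : ∀ i, a ≤ i → i ≤ a + 2 ^ k - 2 → f i ≤ k := by
      intro i h1 h2
      have h3 := hbound i h1 (by omega)
      by_contra hc
      have := huniq i h1 (by omega) (by omega)
      omega
    have hbr : ∀ i, (a + 2 ^ k) ≤ i → i ≤ (a + 2 ^ k) + 2 ^ k - 2 → f i ≤ k := by
      intro i h1 h2
      have h3 := hbound i (by omega) (by omega)
      by_contra hc
      have := huniq i (by omega) (by omega) (by omega)
      omega
    have hL := IH a ha (by omega) hbl
    have hR := IH (a + 2 ^ k) (by omega) (by omega) hbr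
    intro i h1 h2
    rcases lt_trichotomy i P with h | h | h
    · exact hL i h1 (by omega)
    · subst h
      rw [hfP]
      have : i - a + 1 = 2 ^ k := by omega
      rw [this]
      unfold standardLabel
      haveI : Fact (Nat.Prime 2) := ⟨Nat.prime_two⟩
      rw [padicValNat.prime_pow]
    · have hRi := hR i (by omega) (by omega)
      have hm : i - (a + 2 ^ k) + 1 = i - P := by omega
      have hsplit : i - a + 1 = (i - (a + 2 ^ k) + 1) + 2 ^ k := by omega
      rw [hRi, hsplit]
      unfold standardLabel
      rw [padic_shift (by omega) (by omega)]

lemma standard_is_ranking (k : ℕ) (hk : 1 ≤ k) :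
    IsRanking (pathG (2 ^ k - 1))  k
      (fun i => if 1 ≤ i ∧ i ≤ 2 ^ k - 1 then standardLabel i else 1) := by
  set n := 2 ^ k - 1 with hn
  have hnk : n = 2 ^ k - 1 := rfl
  constructor
  · intro v
    by_cases h : 1 ≤ v ∧ v ≤ n
    · simp only [h, if_pos, and_self, if_true]
      exact ⟨by unfold standardLabel; omega, standardLabel_le h.1 h.2⟩
    · simp only [h, if_neg, if_false]
      omega
  · intro u v huv heq p hp
    have hep := walk_endpoints p huv
    have hu : 1 ≤ u ∧ u ≤ n := ⟨hep.1, hep.2.1⟩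
    have hv : 1 ≤ v ∧ v ≤ n := ⟨hep.2.2.1, hep.2.2.2⟩
    simp only [hu, hv, and_self, if_true, if_pos] at heq ⊢
    have hval : padicValNat 2 u = padicValNat 2 v := by
      unfold standardLabel at heq; omega
    rcases lt_or_gt_of_ne (show u ≠ v from huv) with h | h
    · obtain ⟨w, hw1, hw2, hw3⟩ := exists_bigger_val hu.1 h hval
      have hwmem : w ∈ p.support := mem_support_of_between p w (by omega) (by omega)
      have hwr : 1 ≤ w ∧ w ≤ n := ⟨by omega, by omega⟩
      refine ⟨w, hwmem, ?_⟩
      simp only [hwr, and_self, if_pos, if_true]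
      unfold standardLabel
      omega
    · obtain ⟨w, hw1, hw2, hw3⟩ := exists_bigger_val hv.1 h hval.symm
      have hwmem : w ∈ p.support := mem_support_of_between p w (by omega) (by omega)
      have hwr : 1 ≤ w ∧ w ≤ n := ⟨by omega, by omega⟩
      refine ⟨w, hwmem, ?_⟩
      simp only [hwr, and_self, if_pos, if_true]
      unfold standardLabel
      omega

/-- For every integer `k ≥ 1`, the rank number of the path `P_{2^k - 1}`
equals `k`, and the standard ranking is the unique `k`-ranking of `P_{2^k - 1}`. -/
theorem path_rankNumber_eq_and_unique_ranking (k : ℕ) (hk : 1 ≤ k) :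
    rankNumber (pathG (2 ^ k - 1)) = k ∧
    IsRanking (pathG (2 ^ k - 1)) k
      (fun i => if 1 ≤ i ∧ i ≤ 2 ^ k - 1 then standardLabel i else 1) ∧
    ∀ f : ℕ → ℕ, IsRanking (pathG (2 ^ k - 1)) k f →
      ∀ i, 1 ≤ i → i ≤ 2 ^ k - 1 → f i = standardLabel i := by
  obtain ⟨k', rfl⟩ : ∃ k', k = k' + 1 := ⟨k - 1, by omega⟩
  have hrank := standard_is_ranking (k' + 1) (by omega)
  have hpk : (1:ℕ) ≤ 2 ^ k' := Nat.one_le_two_pow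
  have hp2 : (2:ℕ) ^ (k' + 1) = 2 ^ k' + 2 ^ k' := by rw [pow_succ]; omega
  refine ⟨?_, hrank, ?_⟩
  · rw [rankNumber]
    apply le_antisymm
    · exact Nat.sInf_le ⟨_, hrank⟩
    · by_contra hc
      push_neg at hc
      have hne : {m | ∃ f : ℕ → ℕ, IsRanking (pathG (2 ^ (k' + 1) - 1)) m f}.Nonempty :=
        ⟨_, _, hrank⟩
      obtain ⟨f, hf⟩ := Nat.sInf_mem hne
      obtain ⟨i, hi1, hi2, hi3⟩ :=
        lower_bound (fun v => (hf.1 v).1) hf.2 k' 1 (le_refl 1) (by omega)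
      have := (hf.1 i).2
      omega
  · intro f hf i hi1 hi2
    have h := unique_lemma (fun v => (hf.1 v).1) hf.2 (k' + 1) (by omega) 1 (le_refl 1)
      (by omega) (fun j h1 h2 => (hf.1 j).2) i hi1 (by omega)
    rw [h]
    congr 1
    omega
end

section
/- Let f be the standard ranking of P_{2^k−1}, let m be an odd integer with 1 ≤ m < 2^k−1, let t = ⌊log₂ m⌋ with t ≥ 2, let (α_t α_{t−1} … α_1 α_0)_2 be the binary representation of m, and for s = 1,…,t−1 set Ω(s) = m + 1 + Σ_{i=1}^{s}(1−α_i)2^i. Then for every s ∈ {1,…,t−1} and every index j with m < j < Ω(s), one has f(v_j) < f(v_{Ω(s)}). -/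
open SimpleGraph

/-- `Ω(s) = m + 1 + ∑_{i=1}^{s} (1 - αᵢ) 2^i`, where `(α_t α_{t-1} … α_1 α_0)₂` is the
binary representation of `m`. -/
def OmegaP (m s : ℕ) : ℕ :=
  m + 1 + ∑ i ∈ Finset.Icc 1 s, (if m.testBit i then 0 else 1) * 2 ^ i


lemma OmegaP_eq (m : ℕ) (hodd : Odd m) : ∀ s, OmegaP m s = (m / 2 ^ (s + 1) + 1) * 2 ^ (s + 1) := by
  intro s
  induction s with
  | zero =>
    simp [OmegaP]
    obtain ⟨c, hc⟩ := hodd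
    omega
  | succ s ih =>
    have h1 : OmegaP m (s + 1) =
        OmegaP m s + (if m.testBit (s + 1) then 0 else 1) * 2 ^ (s + 1) := by
      rw [OmegaP, OmegaP, Finset.sum_Icc_succ_top (by omega)]
      ring
    have hq : m / 2 ^ (s + 2) = m / 2 ^ (s + 1) / 2 := by
      rw [Nat.div_div_eq_div_mul, pow_succ]
    have htb : m.testBit (s + 1) = decide (m / 2 ^ (s + 1) % 2 = 1) := by
      rw [Nat.testBit_eq_decide_div_mod_eq]
    set q := m / 2 ^ (s + 1) with hqdef
    rw [h1, ih]
    by_cases hb : m.testBit (s + 1)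
    · have : q % 2 = 1 := by simpa [htb] using hb
      obtain ⟨r, hr⟩ : ∃ r, q = 2 * r + 1 := ⟨q / 2, by omega⟩
      have hr2 : q / 2 = r := by omega
      rw [if_pos hb, hq, hr2, hr, pow_succ]
      ring
    · have : q % 2 = 0 := by rcases Nat.mod_two_eq_zero_or_one q with h | h; exact h; simp [htb, h] at hb
      obtain ⟨r, hr⟩ : ∃ r, q = 2 * r := ⟨q / 2, by omega⟩
      have hr2 : q / 2 = r := by omega
      rw [if_neg hb, hq, hr2, hr, pow_succ]
      ring


/-- for the standard ranking `f` of `P_{2^k - 1}`, an odd `m` with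
`1 ≤ m < 2^k - 1` and `t = ⌊log₂ m⌋ ≥ 2`, for every `s ∈ {1, …, t-1}` and every -/
theorem standardLabel_lt_of_lt_Omega (k m : ℕ) (hodd : Odd m) (hm1 : 1 ≤ m)
    (hm2 : m < 2 ^ k - 1) (ht : 2 ≤ Nat.log 2 m) :
    ∀ s, 1 ≤ s → s ≤ Nat.log 2 m - 1 →
      ∀ j, m < j → j < OmegaP m s →
        standardLabel j < standardLabel (OmegaP m s) := by
  intro s hs1 hs2 j hj1 hj2
  haveI : Fact (Nat.Prime 2) := ⟨Nat.prime_two⟩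
  have hΩ := OmegaP_eq m hodd s
  set q := m / 2 ^ (s + 1) with hq
  have hΩne : OmegaP m s ≠ 0 := by rw [hΩ]; positivity
  have hjne : j ≠ 0 := by omega
  have hdvd : 2 ^ (s + 1) ∣ OmegaP m s := hΩ ▸ dvd_mul_left _ _
  have h1 : s + 1 ≤ padicValNat 2 (OmegaP m s) := (padicValNat_dvd_iff_le hΩne).mp hdvd
  have hnd : ¬ 2 ^ (s + 1) ∣ j := by
    rintro ⟨c, hc⟩
    have hqm : q * 2 ^ (s + 1) ≤ m := Nat.div_mul_le_self m _
    have hlt : j < (q + 1) * 2 ^ (s + 1) := hΩ ▸ hj2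
    have hcq : c ≤ q := by
      by_contra h
      push_neg at h
      have : (q + 1) * 2 ^ (s + 1) ≤ 2 ^ (s + 1) * c := by
        calc (q + 1) * 2 ^ (s + 1) ≤ c * 2 ^ (s + 1) := Nat.mul_le_mul_right _ (by omega)
          _ = 2 ^ (s + 1) * c := Nat.mul_comm _ _
      omega
    have : j ≤ q * 2 ^ (s + 1) := by
      rw [hc, Nat.mul_comm]
      exact Nat.mul_le_mul_right _ hcq
    omega
  have h2 : padicValNat 2 j ≤ s := by
    by_contra h
    exact hnd ((padicValNat_dvd_iff_le hjne).mpr (by omega))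
  unfold standardLabel
  omega
end

section
/- Let n > 3 and 3 < j ≤ n, and let f be the standard ranking of P_{2^n−1} with A_j = {v ∈ V(P_{2^n−1}) : f(v) ≥ j}. Then the graph P_{2^n−1} with the vertices of A_j deleted has exactly 2^{n−j+1} connected components, each of which is a path on 2^{j−1}−1 vertices. -/
open SimpleGraph

def blockSet (m N : ℕ) : Set ℕ := {x | 1 ≤ x ∧ x ≤ N ∧ ¬ m ∣ x}

abbrev BG (m N : ℕ) : SimpleGraph (blockSet m N) := (pathG N).induce (blockSet m N)

variable {m K N : ℕ}

lemma bg_adj {x y : blockSet m N} :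
    (BG m N).Adj x y ↔ ((y : ℕ) = x + 1 ∨ (x : ℕ) = y + 1) := by
  obtain ⟨x, hx1, hx2, hx3⟩ := x
  obtain ⟨y, hy1, hy2, hy3⟩ := y
  simp only [BG, induce, comap_adj, Function.Embedding.coe_subtype, pathG, fromRel_adj]
  constructor
  · rintro ⟨-, ⟨-, h, -⟩ | ⟨-, h, -⟩⟩
    · exact Or.inl h
    · exact Or.inr h
  · rintro (h | h)
    · exact ⟨by omega, Or.inl ⟨hx1, h, by omega⟩⟩
    · exact ⟨by omega, Or.inr ⟨hy1, h, by omega⟩⟩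

lemma succ_div_eq (hm : 2 ≤ m) {x : ℕ} (hx : ¬ m ∣ (x+1)) : (x+1) / m = x / m := by
  rw [Nat.succ_div, if_neg hx, add_zero]

lemma bg_adj_div (hm : 2 ≤ m) {x y : blockSet m N} (h : (BG m N).Adj x y) :
    (x : ℕ) / m = (y : ℕ) / m := by
  rw [bg_adj] at h
  obtain ⟨x, hx1, hx2, hx3⟩ := x
  obtain ⟨y, hy1, hy2, hy3⟩ := y
  simp only at h ⊢
  rcases h with h | h
  · subst h; exact (succ_div_eq hm hy3).symm
  · subst h; exact succ_div_eq hm hx3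

lemma mem_block (hm : 2 ≤ m) (hN : N + 1 = K * m) {q r : ℕ} (hq : q < K)
    (hr1 : 1 ≤ r) (hr2 : r < m) : q * m + r ∈ blockSet m N := by
  have h1 : (q+1) * m ≤ K * m := Nat.mul_le_mul_right m (by omega)
  refine ⟨by omega, by rw [add_mul] at h1; omega, fun hd => ?_⟩
  have : m ∣ r := (Nat.dvd_add_right (dvd_mul_left m q)).mp hd
  have := Nat.le_of_dvd (by omega) this
  omega

lemma block_div (hm : 2 ≤ m) {q r : ℕ} (hr2 : r < m) : (q * m + r) / m = q := by
  rw [add_comm, Nat.add_mul_div_right r q (by omega), Nat.div_eq_of_lt hr2, zero_add]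

lemma div_lt_K (hm : 2 ≤ m) (hN : N + 1 = K * m) {v : ℕ} (hv : v ∈ blockSet m N) :
    v / m < K := by
  rw [Nat.div_lt_iff_lt_mul (by omega : 0 < m)]
  have := hv.2.1
  omega

lemma reach_div (hm : 2 ≤ m) {v w : blockSet m N} (h : (BG m N).Reachable v w) :
    (v : ℕ) / m = (w : ℕ) / m := by
  obtain ⟨p⟩ := h
  induction p with
  | nil => rfl
  | cons h p ih => exact (bg_adj_div hm h).trans ih

lemma reach_chain (hm : 2 ≤ m) (hN : N + 1 = K * m) {q : ℕ} (hq : q < K) :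
    ∀ r (h1 : 1 ≤ r) (h2 : r < m),
      (BG m N).Reachable ⟨q * m + 1, mem_block hm hN hq le_rfl (by omega)⟩
        ⟨q * m + r, mem_block hm hN hq h1 h2⟩ := by
  intro r
  induction r with
  | zero => omega
  | succ r ih =>
    intro h1 h2
    rcases Nat.eq_or_lt_of_le h1 with h | h
    · have : q * m + 1 = q * m + (r + 1) := by omega
      convert Reachable.refl _ using 2 <;> omega
    · have hr1 : 1 ≤ r := by omega
      have hr2 : r < m := by omega
      refine (ih hr1 hr2).trans (Adj.reachable ?_)
      rw [bg_adj]
      left; simp [add_assoc]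

lemma reach_to_rep (hm : 2 ≤ m) (hN : N + 1 = K * m) (v : blockSet m N) :
    (BG m N).Reachable
      ⟨(v : ℕ) / m * m + 1,
        mem_block hm hN (div_lt_K hm hN v.2) le_rfl (by omega)⟩ v := by
  have h1 : (v : ℕ) % m ≠ 0 := fun hc => v.2.2.2 (Nat.dvd_of_mod_eq_zero hc)
  have h2 : (v : ℕ) % m < m := Nat.mod_lt _ (by omega)
  have h3 : (v : ℕ) = (v : ℕ) / m * m + (v : ℕ) % m := by
    rw [mul_comm]; exact (Nat.div_add_mod _ _).symm
  have := reach_chain hm hN (div_lt_K hm hN v.2) ((v : ℕ) % m) (by omega) h2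
  convert this using 2
  all_goals first | exact Subtype.ext h3 | exact h3 | omega

noncomputable def qc (hm : 2 ≤ m) : (BG m N).ConnectedComponent → ℕ :=
  ConnectedComponent.lift (fun v => (v : ℕ) / m)
    (fun v w p _ => reach_div hm ⟨p⟩)

lemma qc_mk (hm : 2 ≤ m) (v : blockSet m N) :
    qc hm ((BG m N).connectedComponentMk v) = (v : ℕ) / m := rfl

noncomputable def compEquiv (hm : 2 ≤ m) (hN : N + 1 = K * m) :
    (BG m N).ConnectedComponent ≃ Fin K where
  toFun c := ⟨qc hm c, by
    induction c using ConnectedComponent.ind with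
    | _ v => exact div_lt_K hm hN v.2⟩
  invFun q := (BG m N).connectedComponentMk
    ⟨(q : ℕ) * m + 1, mem_block hm hN q.2 le_rfl (by omega)⟩
  left_inv c := by
    induction c using ConnectedComponent.ind with
    | _ v =>
      simp only [qc_mk]
      exact ConnectedComponent.sound (reach_to_rep hm hN v)
  right_inv q := by
    ext
    simp only [qc_mk]
    exact block_div hm (by omega)

lemma card_components (hm : 2 ≤ m) (hN : N + 1 = K * m) :
    Nat.card (BG m N).ConnectedComponent = K := by
  rw [Nat.card_congr (compEquiv hm hN), Nat.card_eq_fintype_card, Fintype.card_fin]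

lemma block_mod (hm : 2 ≤ m) {q r : ℕ} (hr2 : r < m) : (q * m + r) % m = r := by
  rw [add_comm, Nat.add_mul_mod_self_right, Nat.mod_eq_of_lt hr2]

lemma reach_of_div_eq (hm : 2 ≤ m) (hN : N + 1 = K * m) {x y : blockSet m N}
    (h : (x : ℕ) / m = (y : ℕ) / m) : (BG m N).Reachable x y := by
  have h1 := reach_to_rep hm hN x
  have h2 := reach_to_rep hm hN y
  have h3 : (⟨(x : ℕ) / m * m + 1, mem_block hm hN (div_lt_K hm hN x.2) le_rfl (by omega)⟩ :
      blockSet m N) = ⟨(y : ℕ) / m * m + 1, mem_block hm hN (div_lt_K hm hN y.2) le_rfl (by omega)⟩ :=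
    Subtype.ext (by simp only [h])
  exact h1.symm.trans (h3 ▸ h2)

lemma mem_supp_iff' (hm : 2 ≤ m) (hN : N + 1 = K * m) (v w : blockSet m N) :
    w ∈ ((BG m N).connectedComponentMk v).supp ↔ (w : ℕ) / m = (v : ℕ) / m := by
  rw [ConnectedComponent.mem_supp_iff]
  constructor
  · intro h
    exact reach_div hm (ConnectedComponent.exact h)
  · intro h
    exact ConnectedComponent.sound (reach_of_div_eq hm hN h)

def compIso (hm : 2 ≤ m) (hN : N + 1 = K * m) (v : blockSet m N) :
    ((BG m N).induce ((BG m N).connectedComponentMk v).supp) ≃g pathGraph (m - 1) where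
  toFun w := ⟨((w : blockSet m N) : ℕ) % m - 1, by
    have h1 : ((w : blockSet m N) : ℕ) % m ≠ 0 :=
      fun hc => (w : blockSet m N).2.2.2 (Nat.dvd_of_mod_eq_zero hc)
    have h2 : ((w : blockSet m N) : ℕ) % m < m := Nat.mod_lt _ (by omega)
    omega⟩
  invFun i := ⟨⟨(v : ℕ) / m * m + ((i : ℕ) + 1),
      mem_block hm hN (div_lt_K hm hN v.2) (by omega) (by have := i.2; omega)⟩, by
    rw [mem_supp_iff' hm hN]
    exact block_div hm (by have := i.2; omega)⟩
  left_inv w := by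
    have hdiv : ((w : blockSet m N) : ℕ) / m = (v : ℕ) / m :=
      (mem_supp_iff' hm hN v w).mp w.2
    have h1 : ((w : blockSet m N) : ℕ) % m ≠ 0 :=
      fun hc => (w : blockSet m N).2.2.2 (Nat.dvd_of_mod_eq_zero hc)
    have h2 := Nat.div_add_mod ((w : blockSet m N) : ℕ) m
    refine Subtype.ext (Subtype.ext ?_)
    simp only
    rw [← hdiv, mul_comm]
    omega
  right_inv i := by
    ext
    simp only
    rw [block_mod hm (by have := i.2; omega)]
    omega
  map_rel_iff' := by
    intro a b
    have ha : ((a : blockSet m N) : ℕ) / m = (v : ℕ) / m :=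
      (mem_supp_iff' hm hN v a).mp a.2
    have hb : ((b : blockSet m N) : ℕ) / m = (v : ℕ) / m :=
      (mem_supp_iff' hm hN v b).mp b.2
    have ha1 : ((a : blockSet m N) : ℕ) % m ≠ 0 :=
      fun hc => (a : blockSet m N).2.2.2 (Nat.dvd_of_mod_eq_zero hc)
    have hb1 : ((b : blockSet m N) : ℕ) % m ≠ 0 :=
      fun hc => (b : blockSet m N).2.2.2 (Nat.dvd_of_mod_eq_zero hc)
    have ha2 := Nat.div_add_mod ((a : blockSet m N) : ℕ) m
    have hb2 := Nat.div_add_mod ((b : blockSet m N) : ℕ) m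
    have ha3 : ((a : blockSet m N) : ℕ) % m < m := Nat.mod_lt _ (by omega)
    have hb3 : ((b : blockSet m N) : ℕ) % m < m := Nat.mod_lt _ (by omega)
    rw [show (((BG m N).induce ((BG m N).connectedComponentMk v).supp).Adj a b) =
        ((BG m N).Adj a.1 b.1) from rfl, bg_adj]
    simp only [Equiv.coe_fn_mk, pathGraph_adj, Fin.val_mk]
    rw [← hb] at ha
    have hu : m * (((a : blockSet m N) : ℕ) / m) = m * (((b : blockSet m N) : ℕ) / m) := by
      rw [ha]
    omega


/-- for `n > 3` and `3 < j ≤ n`, the graph obtained from `P_{2^n - 1}` by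
deleting the vertices of `A_j = {v : f(v) ≥ j}` (`f` the standard ranking) has exactly
`2^{n-j+1}` connected components, each of which is a path on `2^{j-1} - 1` vertices. -/
theorem deleted_path_components (n j : ℕ) (hn : 3 < n) (hj1 : 3 < j) (hj2 : j ≤ n) :
    Nat.card ((pathG (2 ^ n - 1)).induce
        {x : ℕ | 1 ≤ x ∧ x ≤ 2 ^ n - 1 ∧ standardLabel x < j}).ConnectedComponent =
      2 ^ (n - j + 1) ∧
    ∀ c : ((pathG (2 ^ n - 1)).induce
        {x : ℕ | 1 ≤ x ∧ x ≤ 2 ^ n - 1 ∧ standardLabel x < j}).ConnectedComponent,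
      Nonempty ((((pathG (2 ^ n - 1)).induce
          {x : ℕ | 1 ≤ x ∧ x ≤ 2 ^ n - 1 ∧ standardLabel x < j}).induce c.supp) ≃g
        SimpleGraph.pathGraph (2 ^ (j - 1) - 1)) := by
  have hm : 2 ≤ 2 ^ (j - 1) := by
    calc 2 = 2 ^ 1 := (pow_one 2).symm
    _ ≤ 2 ^ (j - 1) := Nat.pow_le_pow_right (by omega) (by omega)
  have hN : 2 ^ n - 1 + 1 = 2 ^ (n - j + 1) * 2 ^ (j - 1) := by
    rw [← pow_add]
    have h1 : n - j + 1 + (j - 1) = n := by omega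
    rw [h1]
    have := Nat.one_le_two_pow (n := n)
    omega
  have hset : {x : ℕ | 1 ≤ x ∧ x ≤ 2 ^ n - 1 ∧ standardLabel x < j} =
      blockSet (2 ^ (j - 1)) (2 ^ n - 1) := by
    ext x
    simp only [blockSet, Set.mem_setOf_eq, standardLabel, and_congr_right_iff]
    intro hx1 _
    haveI : Fact (Nat.Prime 2) := ⟨Nat.prime_two⟩
    rw [padicValNat_dvd_iff_le (by omega : x ≠ 0)]
    omega
  rw [hset]
  exact ⟨card_components hm hN,
    fun c => c.ind fun v => ⟨compIso hm hN v⟩⟩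
end

section
/- Let k ≥ 1 and regard P_{2^k−1} as the subgraph of C_{2^k} induced on {v_1,…,v_{2^k−1}}. If an edge e = {v_m, v_n} with m < n ≤ 2^k−1 and e ∉ E(C_{2^k}) is good for P_{2^k−1}, then e is good for C_{2^k}. -/
open SimpleGraph

/-- An edge `e ∉ E(G)` is good for `G` if adding it does not change the rank number. -/
def goodEdge {V : Type*} (G : SimpleGraph V) (e : Sym2 V) : Prop :=
  rankNumber (G ⊔ SimpleGraph.fromEdgeSet {e}) = rankNumber G

/-- The cycle `C_n` on vertices `v_1, …, v_n` (vertex `vᵢ` is the natural number `i`),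
with edges `vᵢ v_{i+1}` for `1 ≤ i ≤ n - 1` together with the edge `v_n v_1`. -/
def cycleG (n : ℕ) : SimpleGraph ℕ :=
  SimpleGraph.fromRel (fun a b => (1 ≤ a ∧ b = a + 1 ∧ b ≤ n) ∨ (a = n ∧ b = 1))

/-- monotone in k -/
lemma IsRanking.mono {V : Type*} {G : SimpleGraph V} {k k' : ℕ} {f : V → ℕ}
    (h : IsRanking G k f) (hk : k ≤ k') : IsRanking G k' f :=
  ⟨fun v => ⟨(h.1 v).1, le_trans (h.1 v).2 hk⟩, h.2⟩

/-- a ranking of a supergraph is a ranking of the subgraph -/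
lemma IsRanking.anti {V : Type*} {G G' : SimpleGraph V} {k : ℕ} {f : V → ℕ}
    (hle : G ≤ G') (h : IsRanking G' k f) : IsRanking G k f := by
  refine ⟨h.1, fun u v huv hfe p hp => ?_⟩
  obtain ⟨w, hw, hlt⟩ := h.2 u v huv hfe (p.mapLe hle) (hp.mapLe hle)
  refine ⟨w, ?_, hlt⟩
  have : (p.mapLe hle).support = p.support := by
    rw [Walk.mapLe, Walk.support_map]
    exact List.map_id' _
  rwa [this] at hw

lemma no_walk_to_isolated {V : Type*} {G : SimpleGraph V} {u v : V}
    (h : ∀ x, ¬ G.Adj v x) (hne : u ≠ v) (p : G.Walk u v) : False := by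
  have key : ∀ (q : G.Walk v u), False := by
    intro q
    cases q with
    | nil => exact hne rfl
    | cons ha _ => exact h _ ha
  exact key p.reverse

lemma support_endpoint_or_adj {V : Type*} {G : SimpleGraph V} {u v : V}
    (p : G.Walk u v) {w : V} (hw : w ∈ p.support) : w = v ∨ ∃ x, G.Adj w x := by
  induction p with
  | nil => left; simpa using hw
  | cons ha q ih =>
    rw [Walk.support_cons] at hw
    rcases List.mem_cons.mp hw with h | h
    · right; exact ⟨_, h ▸ ha⟩
    · exact ih h

/-- explicit ranking for graphs with edges inside [1,N] -/
lemma explicit_ranking {G : SimpleGraph ℕ} {N : ℕ} (hN : 1 ≤ N)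
    (hb : ∀ a b, G.Adj a b → 1 ≤ a ∧ a ≤ N ∧ 1 ≤ b ∧ b ≤ N) :
    IsRanking G N (fun v => if 1 ≤ v ∧ v ≤ N then v else 1) := by
  constructor
  · intro v
    by_cases h : 1 ≤ v ∧ v ≤ N <;> simp [h] <;> omega
  · intro u v huv hfe p hp
    exfalso
    by_cases hv : 1 ≤ v ∧ v ≤ N
    · by_cases hu : 1 ≤ u ∧ u ≤ N
      · simp only [hu, hv, if_pos] at hfe; exact huv hfe
      · exact no_walk_to_isolated (fun x hx => hu ⟨(hb u x hx).1, (hb u x hx).2.1⟩)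
          (Ne.symm huv) p.reverse
    · exact no_walk_to_isolated (fun x hx => hv ⟨(hb v x hx).1, (hb v x hx).2.1⟩) huv p

lemma pathG_adj_bound {M a b : ℕ} (h : (pathG M).Adj a b) :
    1 ≤ a ∧ a ≤ M ∧ 1 ≤ b ∧ b ≤ M := by
  rw [pathG, fromRel_adj] at h
  omega

lemma cycleG_adj_bound {N a b : ℕ} (hN : 1 ≤ N) (h : (cycleG N).Adj a b) :
    1 ≤ a ∧ a ≤ N ∧ 1 ≤ b ∧ b ≤ N := by
  rw [cycleG, fromRel_adj] at h
  omega

lemma cycle_reach {N : ℕ} (hN : 1 ≤ N) : ∀ i, 1 ≤ i → i ≤ N → (cycleG N).Reachable 1 i := by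
  intro i
  induction i with
  | zero => omega
  | succ j ih =>
    intro h1 h2
    rcases Nat.eq_or_lt_of_le h1 with h | h
    · exact h ▸ Reachable.refl 1
    · have hj : (cycleG N).Adj j (j+1) := by
        rw [cycleG, fromRel_adj]
        exact ⟨by omega, Or.inl (Or.inl ⟨by omega, rfl, h2⟩)⟩
      exact (ih (by omega) (by omega)).trans hj.reachable


/-- rotation of the block `[1,N]` by `j`, identity elsewhere -/
def phi (N j : ℕ) (i : ℕ) : ℕ := if 1 ≤ i ∧ i ≤ N then (i + j - 1) % N + 1 else i

lemma phi_lt {N j i : ℕ} (hN : 1 ≤ N) (hi : 1 ≤ i ∧ i ≤ N) :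
    1 ≤ phi N j i ∧ phi N j i ≤ N := by
  have := Nat.mod_lt (i + j - 1) (show 0 < N by omega)
  rw [phi, if_pos hi]
  omega

lemma phi_top {N j : ℕ} (hj1 : 1 ≤ j) (hjN : j ≤ N) : phi N j N = j := by
  have h1 : 1 ≤ N := le_trans hj1 hjN
  rw [phi, if_pos ⟨h1, le_refl N⟩]
  have : N + j - 1 = N + (j - 1) := by omega
  rw [this, Nat.add_mod_left, Nat.mod_eq_of_lt (by omega)]
  omega

lemma phi_inj {N j : ℕ} (hN : 1 ≤ N) : Function.Injective (phi N j) := by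
  intro a b h
  simp only [phi] at h
  by_cases ha : 1 ≤ a ∧ a ≤ N <;> by_cases hb : 1 ≤ b ∧ b ≤ N
  · rw [if_pos ha, if_pos hb] at h
    have h' : (a - 1 + j) % N = (b - 1 + j) % N := by
      have e1 : a + j - 1 = a - 1 + j := by omega
      have e2 : b + j - 1 = b - 1 + j := by omega
      rw [← e1, ← e2]; omega
    have h2 : a - 1 ≡ b - 1 [MOD N] := Nat.ModEq.add_right_cancel' j h'
    have h3 : (a - 1) % N = (b - 1) % N := h2
    rw [Nat.mod_eq_of_lt (by omega), Nat.mod_eq_of_lt (by omega)] at h3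
    omega
  · have h1 := phi_lt (j := j) hN ha
    rw [phi, if_pos ha] at h1
    rw [if_pos ha, if_neg hb] at h
    omega
  · have h1 := phi_lt (j := j) hN hb
    rw [phi, if_pos hb] at h1
    rw [if_neg ha, if_pos hb] at h
    omega
  · rw [if_neg ha, if_neg hb] at h; exact h

lemma phi_rel {N j a b : ℕ} (hN : 2 ≤ N) (hj1 : 1 ≤ j) (hjN : j ≤ N)
    (h : 1 ≤ a ∧ b = a + 1 ∧ b ≤ N - 1) : (cycleG N).Adj (phi N j a) (phi N j b) := by
  obtain ⟨ha1, rfl, hb⟩ := h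
  have hain : 1 ≤ a ∧ a ≤ N := by omega
  have hbin : 1 ≤ a + 1 ∧ a + 1 ≤ N := by omega
  set x := (a + j - 1) % N with hxdef
  have hxlt : x < N := Nat.mod_lt _ (by omega)
  have hstep : (a + 1 + j - 1) % N = (x + 1) % N := by
    have e1 : a + 1 + j - 1 = (a + j - 1) + 1 := by omega
    rw [e1, Nat.add_mod, ← hxdef, Nat.mod_eq_of_lt (show 1 < N by omega)]
  rw [cycleG, fromRel_adj, phi, if_pos hain, phi, if_pos hbin, ← hxdef, hstep]
  by_cases hxe : x = N - 1
  · have : (x + 1) % N = 0 := by rw [show x + 1 = N by omega, Nat.mod_self]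
    rw [this]
    exact ⟨by omega, Or.inl (Or.inr ⟨by omega, rfl⟩)⟩
  · have : (x + 1) % N = x + 1 := Nat.mod_eq_of_lt (by omega)
    rw [this]
    exact ⟨by omega, Or.inl (Or.inl ⟨by omega, rfl, by omega⟩)⟩

lemma phi_hom {N j a b : ℕ} (hN : 2 ≤ N) (hj1 : 1 ≤ j) (hjN : j ≤ N)
    (h : (pathG (N-1)).Adj a b) : (cycleG N).Adj (phi N j a) (phi N j b) := by
  rw [pathG, fromRel_adj] at h
  rcases h.2 with hr | hr
  · exact phi_rel hN hj1 hjN hr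
  · exact (phi_rel hN hj1 hjN hr).symm

lemma path_rank_lt_cycle_rank {N : ℕ} (hN : 2 ≤ N) :
    rankNumber (pathG (N-1)) < rankNumber (cycleG N) := by
  have hCne : {k | ∃ f : ℕ → ℕ, IsRanking (cycleG N) k f}.Nonempty :=
    ⟨N, _, explicit_ranking (by omega) (fun a b h => cycleG_adj_bound (by omega) h)⟩
  obtain ⟨f, hf⟩ : ∃ f : ℕ → ℕ, IsRanking (cycleG N) (rankNumber (cycleG N)) f :=
    Nat.sInf_mem hCne
  set c := rankNumber (cycleG N) with hc
  have hc2 : 2 ≤ c := by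
    by_contra hlt
    push_neg at hlt
    have h1 := hf.1 1
    have h2 := hf.1 2
    have hadj : (cycleG N).Adj 1 2 := by
      rw [cycleG, fromRel_adj]
      exact ⟨by omega, Or.inl (Or.inl ⟨le_refl 1, rfl, hN⟩)⟩
    obtain ⟨w, hw, hlt'⟩ := hf.2 1 2 (by omega) (by omega)
      (Walk.cons hadj Walk.nil) (by simp [hadj.ne])
    have := (hf.1 w).2
    omega
  have huniq : ∀ u v, 1 ≤ u → u ≤ N → 1 ≤ v → v ≤ N → f u = c → f v = c → u = v := by
    intro u v hu1 hu2 hv1 hv2 hfu hfv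
    by_contra hne
    obtain ⟨p⟩ : (cycleG N).Reachable u v :=
      ((cycle_reach (by omega) u hu1 hu2).symm).trans (cycle_reach (by omega) v hv1 hv2)
    obtain ⟨w, hw, hlt'⟩ := hf.2 u v hne (by rw [hfu, hfv]) p.bypass p.bypass_isPath
    have := (hf.1 w).2
    omega
  obtain ⟨j, hj1, hjN, hjuniq⟩ : ∃ j, 1 ≤ j ∧ j ≤ N ∧ ∀ i, 1 ≤ i → i ≤ N → f i = c → i = j := by
    by_cases hex : ∃ i, 1 ≤ i ∧ i ≤ N ∧ f i = c
    · obtain ⟨i, h1, h2, h3⟩ := hex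
      exact ⟨i, h1, h2, fun i' a b cc => huniq i' i a b h1 h2 cc h3⟩
    · exact ⟨N, by omega, le_refl N, fun i a b cc => absurd ⟨i, a, b, cc⟩ hex⟩
  set Φ : pathG (N-1) →g cycleG N := ⟨phi N j, fun h => phi_hom hN hj1 hjN h⟩ with hΦ
  have hnotmax : ∀ i, 1 ≤ i → i ≤ N - 1 → f (phi N j i) ≤ c - 1 := by
    intro i h1 h2
    have hin : 1 ≤ phi N j i ∧ phi N j i ≤ N := phi_lt (by omega) ⟨h1, by omega⟩
    have hle := (hf.1 (phi N j i)).2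
    rcases Nat.lt_or_ge (f (phi N j i)) c with h | h
    · omega
    · exfalso
      have hfc : f (phi N j i) = c := by omega
      have heq : phi N j i = phi N j N := (hjuniq _ hin.1 hin.2 hfc).trans (phi_top hj1 hjN).symm
      have := phi_inj (by omega : 1 ≤ N) heq
      omega
  set f' : ℕ → ℕ := fun i => if 1 ≤ i ∧ i ≤ N - 1 then f (phi N j i) else 1 with hf'
  have hrank : IsRanking (pathG (N-1)) (c-1) f' := by
    constructor
    · intro v
      by_cases hv : 1 ≤ v ∧ v ≤ N - 1
      · rw [hf']
        simp only [if_pos hv]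
        exact ⟨(hf.1 _).1, hnotmax v hv.1 hv.2⟩
      · rw [hf']
        simp only [if_neg hv]
        omega
    · intro u v huv hfe p hp
      by_cases hu : 1 ≤ u ∧ u ≤ N - 1
      swap
      · exact absurd (no_walk_to_isolated
          (fun x hx => hu ⟨(pathG_adj_bound hx).1, (pathG_adj_bound hx).2.1⟩)
          (Ne.symm huv) p.reverse) id
      by_cases hv : 1 ≤ v ∧ v ≤ N - 1
      swap
      · exact absurd (no_walk_to_isolated
          (fun x hx => hv ⟨(pathG_adj_bound hx).1, (pathG_adj_bound hx).2.1⟩)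
          huv p) id
      have hsup : ∀ w ∈ p.support, 1 ≤ w ∧ w ≤ N - 1 := by
        intro w hw
        rcases support_endpoint_or_adj p hw with rfl | ⟨x, hx⟩
        · exact hv
        · have := pathG_adj_bound hx; omega
      have hne : phi N j u ≠ phi N j v := fun h => huv (phi_inj (by omega : 1 ≤ N) h)
      have hfeq : f (phi N j u) = f (phi N j v) := by
        rw [hf'] at hfe
        simpa only [if_pos hu, if_pos hv] using hfe
      obtain ⟨w', hw', hlt'⟩ := hf.2 (phi N j u) (phi N j v) hne hfeq (p.map Φ)
        (Walk.map_isPath_of_injective (phi_inj (by omega : 1 ≤ N)) hp)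
      rw [Walk.support_map] at hw'
      obtain ⟨w, hw, rfl⟩ := List.mem_map.mp hw'
      refine ⟨w, hw, ?_⟩
      have hwin := hsup w hw
      rw [hf']
      simp only [if_pos hu, if_pos hwin]
      exact hlt'
  have hle : rankNumber (pathG (N-1)) ≤ c - 1 := Nat.sInf_le ⟨f', hrank⟩
  omega

lemma sup_edge_bound {G : SimpleGraph ℕ} {N m n : ℕ}
    (hb : ∀ a b, G.Adj a b → 1 ≤ a ∧ a ≤ N ∧ 1 ≤ b ∧ b ≤ N)
    (hm : 1 ≤ m) (hmN : m ≤ N) (hn : 1 ≤ n) (hnN : n ≤ N) :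
    ∀ a b, (G ⊔ SimpleGraph.fromEdgeSet {s(m,n)}).Adj a b →
      1 ≤ a ∧ a ≤ N ∧ 1 ≤ b ∧ b ≤ N := by
  intro a b h
  rw [sup_adj] at h
  rcases h with h | h
  · exact hb a b h
  · rw [fromEdgeSet_adj, Set.mem_singleton_iff, Sym2.eq_iff] at h
    omega

lemma cycle_sup_to_path_sup {N m n a b : ℕ} (hN : 2 ≤ N) (haN : a ≠ N) (hbN : b ≠ N)
    (h : (cycleG N ⊔ SimpleGraph.fromEdgeSet {s(m,n)}).Adj a b) :
    (pathG (N-1) ⊔ SimpleGraph.fromEdgeSet {s(m,n)}).Adj a b := by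
  rw [sup_adj] at h ⊢
  rcases h with h | h
  · left
    rw [cycleG, fromRel_adj] at h
    rw [pathG, fromRel_adj]
    refine ⟨h.1, ?_⟩
    have h2 := h.2
    omega
  · right; exact h


/-- regarding `P_{2^k - 1}` as the subgraph of `C_{2^k}` induced on
`{v_1, …, v_{2^k - 1}}`, if an edge `e = {v_m, v_n}` with `m < n ≤ 2^k - 1` and
`e ∉ E(C_{2^k})` is good for `P_{2^k - 1}`, then `e` is good for `C_{2^k}`. -/
theorem good_for_path_good_for_cycle (k m n : ℕ) (hk : 1 ≤ k) (hm : 1 ≤ m)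
    (hmn : m < n) (hn : n ≤ 2 ^ k - 1)
    (he : s(m, n) ∉ (cycleG (2 ^ k)).edgeSet)
    (hgood : goodEdge (pathG (2 ^ k - 1)) s(m, n)) :
    goodEdge (cycleG (2 ^ k)) s(m, n) := by
  unfold goodEdge at hgood ⊢
  set N := 2 ^ k with hNdef
  have hN2 : 2 ≤ N := by
    have : 2 ^ 1 ≤ 2 ^ k := Nat.pow_le_pow_right (by norm_num) hk
    simpa [hNdef] using this
  set E := SimpleGraph.fromEdgeSet {s(m,n)} with hE
  have hmN : m ≤ N - 1 := by omega
  have hCEb : ∀ a b, (cycleG N ⊔ E).Adj a b → 1 ≤ a ∧ a ≤ N ∧ 1 ≤ b ∧ b ≤ N :=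
    sup_edge_bound (fun a b h => cycleG_adj_bound (by omega) h) hm (by omega) (by omega) (by omega)
  have hPEb : ∀ a b, (pathG (N-1) ⊔ E).Adj a b → 1 ≤ a ∧ a ≤ N-1 ∧ 1 ≤ b ∧ b ≤ N-1 :=
    sup_edge_bound (fun a b h => pathG_adj_bound h) hm hmN (by omega) hn
  set c := rankNumber (cycleG N) with hc
  have hlow : rankNumber (pathG (N-1)) < c := path_rank_lt_cycle_rank hN2
  have hPEne : {k' | ∃ f : ℕ → ℕ, IsRanking (pathG (N-1) ⊔ E) k' f}.Nonempty :=
    ⟨N-1, _, explicit_ranking (by omega) hPEb⟩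
  obtain ⟨g, hg⟩ : ∃ g : ℕ → ℕ, IsRanking (pathG (N-1) ⊔ E) (rankNumber (pathG (N-1) ⊔ E)) g :=
    Nat.sInf_mem hPEne
  have hgc : IsRanking (pathG (N-1) ⊔ E) (c-1) g := hg.mono (by omega)
  have hc2 : 2 ≤ c := by have := hgc.1 0; omega
  set g' : ℕ → ℕ := fun v => if v = N then c else g v with hg'
  have hg'N : g' N = c := by rw [hg']; simp
  have hrank' : IsRanking (cycleG N ⊔ E) c g' := by
    constructor
    · intro v
      rw [hg']
      by_cases hv : v = N
      · simp only [if_pos hv]; omega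
      · simp only [if_neg hv]; have := hgc.1 v; omega
    · intro u v huv hfe p hp
      by_cases hu : u = N
      · exfalso
        subst hu
        have hvN : v ≠ N := fun h => huv h.symm
        have h2 : g' v = g v := by rw [hg']; simp [hvN]
        have := hgc.1 v
        omega
      have hgu : g' u = g u := by rw [hg']; simp [hu]
      by_cases hv : v = N
      · exfalso
        subst hv
        have := hgc.1 u
        omega
      have hgv : g' v = g v := by rw [hg']; simp [hv]
      by_cases hNs : N ∈ p.support
      · refine ⟨N, hNs, ?_⟩
        rw [hgu, hg'N]
        have := hgc.1 u
        omega
      · have htr : ∀ e' ∈ p.edges, e' ∈ (pathG (N-1) ⊔ E).edgeSet := by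
          intro e'
          induction e' using Sym2.ind with
          | _ a b =>
            intro he'
            have hmem := p.edges_subset_edgeSet he'
            have haS := Walk.fst_mem_support_of_mem_edges p he'
            have hbS := Walk.snd_mem_support_of_mem_edges p he'
            rw [mem_edgeSet] at hmem ⊢
            exact cycle_sup_to_path_sup hN2 (fun h => hNs (h ▸ haS)) (fun h => hNs (h ▸ hbS)) hmem
        obtain ⟨w, hw, hlt⟩ := hgc.2 u v huv (by rw [hgu, hgv] at hfe; exact hfe)
          (p.transfer _ htr) (hp.transfer htr)
        rw [Walk.support_transfer] at hw
        have hwN : w ≠ N := fun h => hNs (h ▸ hw)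
        refine ⟨w, hw, ?_⟩
        have hgw : g' w = g w := by rw [hg']; simp [hwN]
        rw [hgu, hgw]
        exact hlt
  have hub : rankNumber (cycleG N ⊔ E) ≤ c := Nat.sInf_le ⟨g', hrank'⟩
  have hlb : c ≤ rankNumber (cycleG N ⊔ E) := by
    have hCEne : {k' | ∃ f : ℕ → ℕ, IsRanking (cycleG N ⊔ E) k' f}.Nonempty :=
      ⟨N, _, explicit_ranking (by omega) hCEb⟩
    obtain ⟨h, hh⟩ : ∃ h : ℕ → ℕ, IsRanking (cycleG N ⊔ E) (rankNumber (cycleG N ⊔ E)) h :=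
      Nat.sInf_mem hCEne
    exact Nat.sInf_le ⟨h, hh.anti le_sup_left⟩
  omega
end

section
/- For every integer n > 3, μ(C_{2^n}) = (n−2)·2^n + 1; that is, the maximum number of edges that can be added to the cycle C_{2^n} without changing its rank number is (n−2)·2^n + 1. -/
open SimpleGraph

/-- `μ(G)` for a graph with carrier `ℕ` whose actual vertex set is `Vs`: the maximum
cardinality of a set `S` of edges on `Vs` (non-loops, disjoint from `E(G)`) such that
`χᵣ(G ∪ S) = χᵣ(G)`. -/
noncomputable def muOn (G : SimpleGraph ℕ) (Vs : Set ℕ) : ℕ :=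
  sSup {N | ∃ S : Finset (Sym2 ℕ), S.card = N ∧
    (∀ e ∈ S, ¬e.IsDiag ∧ (∀ x ∈ e, x ∈ Vs) ∧ e ∉ G.edgeSet) ∧
    rankNumber (G ⊔ SimpleGraph.fromEdgeSet (S : Set (Sym2 ℕ))) = rankNumber G}

namespace MuAux

/-! ### generic helpers -/

lemma geom_two : ∀ N : ℕ, (∑ i ∈ Finset.range N, 2 ^ i) + 1 = 2 ^ N := by
  intro N
  induction N with
  | zero => simp
  | succ N ih => rw [Finset.sum_range_succ, pow_succ]; omega

lemma isRanking_mono {G G' : SimpleGraph ℕ} (h : G' ≤ G) {k : ℕ} {f : ℕ → ℕ}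
    (hf : IsRanking G k f) : IsRanking G' k f := by
  refine ⟨hf.1, fun u v hne heq p hp => ?_⟩
  obtain ⟨w, hw, hlt⟩ := hf.2 u v hne heq (p.mapLe h) (hp.mapLe h)
  have hsup : (Walk.mapLe h p).support = p.support := by
    rw [Walk.mapLe, Walk.support_map]
    exact List.map_id _
  rw [hsup] at hw
  exact ⟨w, hw, hlt⟩

lemma no_walk_from_isolated {G : SimpleGraph ℕ} {u v : ℕ}
    (h : ∀ w, ¬ G.Adj u w) (p : G.Walk u v) : v = u := by
  cases p with
  | nil => rfl
  | cons h' q => exact absurd h' (h _)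

lemma adj_label_ne {G : SimpleGraph ℕ} {k : ℕ} {f : ℕ → ℕ} (hf : IsRanking G k f)
    {u v : ℕ} (h : G.Adj u v) : f u ≠ f v := by
  intro he
  obtain ⟨w, hw, hlt⟩ := hf.2 u v h.ne he (Walk.cons h Walk.nil)
    (by simp [Walk.isPath_def, h.ne])
  simp only [Walk.support_cons, Walk.support_nil, List.mem_cons, List.mem_singleton] at hw
  rcases hw with rfl | hw
  · omega
  · rcases hw with rfl | h'
    · omega
    · simp at h'

lemma up_nbr_unique {G : SimpleGraph ℕ} {k : ℕ} {f : ℕ → ℕ} (hf : IsRanking G k f)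
    {u v w : ℕ} (hv : G.Adj u v) (hw : G.Adj u w) (hlt : f u < f v) (he : f v = f w) :
    v = w := by
  by_contra hne
  obtain ⟨x, hx, hxlt⟩ := hf.2 v w hne he (Walk.cons hv.symm (Walk.cons hw Walk.nil))
    (by simp [Walk.isPath_def, hv.ne', hw.ne, hne])
  simp only [Walk.support_cons, Walk.support_nil, List.mem_cons, List.mem_singleton] at hx
  rcases hx with rfl | rfl | rfl | h'
  · omega
  · omega
  · omega
  · simp at h'

/-! ### arc walks -/

def arcWalk (G : SimpleGraph ℕ) (a : ℕ) :
    (l : ℕ) → (∀ i, i < l → G.Adj (a + i) (a + i + 1)) → G.Walk a (a + l)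
  | 0, _ => Walk.nil
  | l + 1, h => (arcWalk G a l (fun i hi => h i (by omega))).concat (h l (by omega))

lemma arcWalk_support (G : SimpleGraph ℕ) (a : ℕ) :
    ∀ (l : ℕ) (h : ∀ i, i < l → G.Adj (a + i) (a + i + 1)),
      (arcWalk G a l h).support = (List.range (l + 1)).map (a + ·) := by
  intro l
  induction l with
  | zero => intro h; simp [arcWalk, List.range_succ]
  | succ l ih =>
    intro h
    have hr : List.range (l+1+1) = List.range (l+1) ++ [l+1] := by rw [List.range_succ]
    rw [arcWalk, Walk.support_concat, ih, hr, List.map_append]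
    simp

lemma arcWalk_isPath (G : SimpleGraph ℕ) (a l : ℕ)
    (h : ∀ i, i < l → G.Adj (a + i) (a + i + 1)) : (arcWalk G a l h).IsPath := by
  rw [Walk.isPath_def, arcWalk_support]
  exact List.nodup_range.map (fun x y hxy => by omega)

/-! ### the between-sequence length bound -/

lemma core_len : ∀ (k : ℕ) (g : ℕ → ℕ) (len : ℕ),
    (∀ i, i < len → 1 ≤ g i ∧ g i ≤ k) →
    (∀ p q, p < q → q < len → g p = g q → ∃ m, p < m ∧ m < q ∧ g p < g m) →
    len < 2 ^ k := by
  intro k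
  induction k with
  | zero =>
    intro g len hb _
    rcases Nat.eq_zero_or_pos len with h | h
    · omega
    · have := hb 0 h; omega
  | succ k ih =>
    intro g len hb hbet
    rcases Nat.eq_zero_or_pos len with h | h
    · have : (0:ℕ) < 2 ^ (k+1) := by positivity
      omega
    obtain ⟨m, hm, hmax⟩ := Finset.exists_max_image (Finset.range len) g
      ⟨0, Finset.mem_range.2 h⟩
    rw [Finset.mem_range] at hm
    have hmax' : ∀ i, i < len → g i ≤ g m := fun i hi => hmax i (Finset.mem_range.2 hi)
    have hstrict : ∀ i, i < len → i ≠ m → g i < g m := by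
      intro i hi hne
      rcases Nat.lt_or_ge (g i) (g m) with h' | h'
      · exact h'
      have heq : g i = g m := le_antisymm (hmax' i hi) h'
      rcases Nat.lt_or_ge i m with hlt | hge
      · obtain ⟨m', h1, h2, h3⟩ := hbet i m hlt hm heq
        have := hmax' m' (by omega)
        omega
      · have hlt : m < i := by omega
        obtain ⟨m', h1, h2, h3⟩ := hbet m i hlt hi heq.symm
        have := hmax' m' (by omega)
        omega
    -- left part
    have hL : m < 2 ^ k := by
      apply ih g m
      · intro i hi
        have h1 := hb i (by omega)
        have h2 := hstrict i (by omega) (by omega)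
        have h3 := hb m (by omega)
        omega
      · intro p q h1 h2 h3
        exact hbet p q h1 (by omega) h3
    -- right part
    have hR : len - m - 1 < 2 ^ k := by
      apply ih (fun i => g (m + 1 + i)) (len - m - 1)
      · intro i hi
        have h1 := hb (m + 1 + i) (by omega)
        have h2 := hstrict (m + 1 + i) (by omega) (by omega)
        have h3 := hb m (by omega)
        omega
      · intro p q h1 h2 h3
        obtain ⟨m', hm1, hm2, hm3⟩ := hbet (m + 1 + p) (m + 1 + q) (by omega) (by omega) h3
        exact ⟨m' - (m + 1), by omega, by omega, by
          have : m + 1 + (m' - (m + 1)) = m' := by omega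
          rw [this]; exact hm3⟩
    have : (2:ℕ) ^ (k+1) = 2 ^ k + 2 ^ k := by rw [pow_succ]; omega
    omega

/-! ### arc bound from a ranking -/

lemma arc_bound {G : SimpleGraph ℕ} {k : ℕ} {f : ℕ → ℕ} (hf : IsRanking G k f)
    {a l j : ℕ}
    (hadj : ∀ i, i < l → G.Adj (a + i) (a + i + 1))
    (hlab : ∀ i, i ≤ l → f (a + i) ≤ j) : l + 1 < 2 ^ j := by
  apply core_len j (fun i => f (a + i)) (l + 1)
  · intro i hi
    exact ⟨(hf.1 (a + i)).1, hlab i (by omega)⟩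
  · intro p q hpq hq heq
    have hne : a + p ≠ a + q := by omega
    have hadj' : ∀ i, i < q - p → G.Adj (a + p + i) (a + p + i + 1) := by
      intro i hi
      have : a + p + i = a + (p + i) := by omega
      rw [this]
      have : a + (p + i) + 1 = a + (p + i) + 1 := rfl
      exact hadj (p + i) (by omega)
    have hcast : a + p + (q - p) = a + q := by omega
    set w0 : G.Walk (a + p) (a + q) :=
      (arcWalk G (a + p) (q - p) hadj').copy rfl hcast with hw0
    obtain ⟨w, hw, hlt⟩ := hf.2 (a + p) (a + q) hne heq w0
      (by rw [hw0, Walk.isPath_def, Walk.support_copy, ← Walk.isPath_def]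
          exact arcWalk_isPath G (a+p) (q-p) hadj')
    rw [hw0, Walk.support_copy, arcWalk_support] at hw
    simp only [List.mem_map, List.mem_range] at hw
    obtain ⟨d, hd, rfl⟩ := hw
    refine ⟨p + d, ?_, ?_, ?_⟩
    · rcases Nat.eq_zero_or_pos d with rfl | hd0
      · exfalso; simp at hlt
      · omega
    · rcases Nat.lt_or_ge d (q - p) with h' | h'
      · omega
      · exfalso
        have : d = q - p := by omega
        subst this
        rw [hcast, ← heq] at hlt
        omega
    · have : a + (p + d) = a + p + d := by omega
      rw [this]; exact hlt

/-! ### crossing lemma -/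

lemma walk_cross {G : SimpleGraph ℕ} {z : ℕ} :
    ∀ {u v : ℕ} (p : G.Walk u v), u ≤ z → z ≤ v →
      z ∈ p.support ∨ ∃ a b, G.Adj a b ∧ a ∈ p.support ∧ b ∈ p.support ∧ a < z ∧ z < b := by
  intro u v p
  induction p with
  | nil => intro h1 h2; left; simp; omega
  | @cons u w v h q ih =>
    intro h1 h2
    rcases Nat.eq_or_lt_of_le h1 with rfl | hlt
    · left; simp
    rcases le_or_gt w z with hw | hw
    · rcases ih hw h2 with hz | ⟨a, b, hab, ha, hb, h3, h4⟩
      · left; simp [hz]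
      · right; exact ⟨a, b, hab, by simp [ha], by simp [hb], h3, h4⟩
    · right
      exact ⟨u, w, h, by simp, by simp, hlt, hw⟩
/-! ### padic helpers -/

lemma two_pow_val_le {x : ℕ} (hx : x ≠ 0) : 2 ^ padicValNat 2 x ≤ x :=
  Nat.le_of_dvd (Nat.pos_of_ne_zero hx) pow_padicValNat_dvd

lemma val_lt_of_lt_pow {x n : ℕ} (hx : x ≠ 0) (h : x < 2 ^ n) : padicValNat 2 x < n := by
  by_contra h'
  have h2 : (2:ℕ) ^ n ≤ 2 ^ padicValNat 2 x :=
    Nat.pow_le_pow_right (by norm_num) (by omega)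
  have := two_pow_val_le hx
  omega

lemma le_val_of_dvd {j x : ℕ} (hx : x ≠ 0) (h : 2 ^ j ∣ x) : j ≤ padicValNat 2 x :=
  (padicValNat_dvd_iff_le hx).1 h

lemma val_eq_of_dvd_not_dvd {c x : ℕ} (hx : x ≠ 0) (h1 : 2 ^ c ∣ x)
    (h2 : ¬ 2 ^ (c+1) ∣ x) : padicValNat 2 x = c := by
  have ha := le_val_of_dvd hx h1
  by_contra h'
  exact h2 (dvd_trans (pow_dvd_pow 2 (by omega)) pow_padicValNat_dvd)

lemma val_add_pow {j o s : ℕ} (ho : 2 ^ j ∣ o) (hs1 : s ≠ 0) (hs2 : s < 2 ^ j) :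
    padicValNat 2 (o + s) = padicValNat 2 s := by
  set c := padicValNat 2 s with hc
  have hcj : c < j := val_lt_of_lt_pow hs1 hs2
  apply val_eq_of_dvd_not_dvd (by omega)
  · exact Dvd.dvd.add (dvd_trans (pow_dvd_pow 2 (by omega)) ho) pow_padicValNat_dvd
  · intro hdvd
    have h1 : (2:ℕ) ^ (c+1) ∣ o := dvd_trans (pow_dvd_pow 2 (by omega)) ho
    have h2 : (2:ℕ) ^ (c+1) ∣ s := (Nat.dvd_add_right h1).1 hdvd
    exact pow_succ_padicValNat_not_dvd hs1 h2

lemma exists_between {u v : ℕ} (hu : u ≠ 0) (hv : v ≠ 0) (hlt : u < v)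
    (heq : padicValNat 2 u = padicValNat 2 v) :
    ∃ t, u < t ∧ t < v ∧ padicValNat 2 u < padicValNat 2 t := by
  set c := padicValNat 2 u with hc
  obtain ⟨a, ha⟩ : (2:ℕ) ^ c ∣ u := pow_padicValNat_dvd
  obtain ⟨b, hb⟩ : (2:ℕ) ^ c ∣ v := heq ▸ pow_padicValNat_dvd
  have hpow : (0:ℕ) < 2 ^ c := by positivity
  have haodd : ¬ 2 ∣ a := by
    intro hdvd
    obtain ⟨d, hd⟩ := hdvd
    apply pow_succ_padicValNat_not_dvd (p := 2) hu
    rw [← hc]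
    exact ⟨d, by rw [ha, hd, pow_succ]; ring⟩
  have hbodd : ¬ 2 ∣ b := by
    intro hdvd
    obtain ⟨d, hd⟩ := hdvd
    apply pow_succ_padicValNat_not_dvd (p := 2) hv
    rw [← heq]
    exact ⟨d, by rw [hb, hd, pow_succ]; ring⟩
  have hab : a < b := by
    rcases Nat.lt_or_ge a b with h | h
    · exact h
    · exfalso
      have : v ≤ u := by rw [ha, hb]; exact Nat.mul_le_mul_left _ h
      omega
  have hab2 : a + 2 ≤ b := by
    rcases Nat.lt_or_ge (a+1) b with h | h
    · omega
    · exfalso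
      have hba : b = a + 1 := by omega
      rcases Nat.even_or_odd a with ⟨d, hd⟩ | ⟨d, hd⟩
      · exact haodd ⟨d, by omega⟩
      · exact hbodd ⟨d+1, by omega⟩
  refine ⟨u + 2 ^ c, by omega, ?_, ?_⟩
  · have h1 : u + 2^c = 2^c * (a + 1) := by rw [ha]; ring
    have h2 : 2^c * (a+1) < 2^c * (a+2) := by
      exact Nat.mul_lt_mul_of_pos_left (by omega) hpow
    have h3 : 2^c * (a+2) ≤ 2^c * b := Nat.mul_le_mul_left _ hab2
    omega
  · obtain ⟨d, hd⟩ : ∃ d, a + 1 = 2 * d := by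
      rcases Nat.even_or_odd a with ⟨d, hd⟩ | ⟨d, hd⟩
      · exact absurd ⟨d, by omega⟩ haodd
      · exact ⟨d+1, by omega⟩
    have ht : u + 2^c = 2^(c+1) * d := by
      have h1 : u + 2^c = 2^c * (a + 1) := by rw [ha]; ring
      rw [h1, hd, pow_succ]; ring
    have := le_val_of_dvd (x := u + 2^c) (by omega) ⟨d, ht⟩
    omega

/-! ### the extremal graph -/

/-- labels: ruler function on `[1, 2^n-1]`, `n+1` at `2^n`. -/
def Lv (n x : ℕ) : ℕ := if x = 2 ^ n then n + 1 else padicValNat 2 x + 1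

def fstar (n : ℕ) (x : ℕ) : ℕ := if 1 ≤ x ∧ x ≤ 2 ^ n then Lv n x else 1

def relS (n : ℕ) (a b : ℕ) : Prop :=
  1 ≤ a ∧ a < b ∧ b ≤ 2 ^ n ∧
    (b = 2 ^ n ∨ ∀ t, a < t → t < b → Lv n t < max (Lv n a) (Lv n b))

def Gstar (n : ℕ) : SimpleGraph ℕ := SimpleGraph.fromRel (relS n)

lemma Lv_small {n x : ℕ} (hx : x ≠ 2 ^ n) : Lv n x = padicValNat 2 x + 1 := if_neg hx

lemma Lv_le {n x : ℕ} (h1 : 1 ≤ x) (h2 : x < 2 ^ n) : Lv n x ≤ n := by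
  rw [Lv_small (by omega)]
  have := val_lt_of_lt_pow (x := x) (by omega) h2
  omega

lemma fstar_eq {n x : ℕ} (h1 : 1 ≤ x) (h2 : x ≤ 2 ^ n) : fstar n x = Lv n x :=
  if_pos ⟨h1, h2⟩

lemma fstar_bounds (n : ℕ) (x : ℕ) : 1 ≤ fstar n x ∧ fstar n x ≤ n + 1 := by
  unfold fstar Lv
  split
  · rename_i h
    split
    · omega
    · rename_i h'
      have : x < 2 ^ n := by omega
      have := val_lt_of_lt_pow (x := x) (by omega) this
      omega
  · omega

lemma gstar_adj {n a b : ℕ} : (Gstar n).Adj a b ↔ a ≠ b ∧ (relS n a b ∨ relS n b a) :=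
  SimpleGraph.fromRel_adj _ a b

lemma gstar_range {n a b : ℕ} (h : (Gstar n).Adj a b) :
    1 ≤ a ∧ a ≤ 2 ^ n ∧ 1 ≤ b ∧ b ≤ 2 ^ n := by
  rw [gstar_adj] at h
  obtain ⟨-, h | h⟩ := h <;> obtain ⟨h1, h2, h3, -⟩ := h <;> omega

lemma fstar_aux {n : ℕ} (hn : 3 < n) {u v : ℕ} (hu1 : 1 ≤ u) (huv : u < v)
    (hv : v ≤ 2 ^ n - 1) (heq : fstar n u = fstar n v) (p : (Gstar n).Walk u v) :
    ∃ w ∈ p.support, fstar n u < fstar n w := by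
  have hm : (16:ℕ) ≤ 2 ^ n := by
    calc (16:ℕ) = 2 ^ 4 := by norm_num
    _ ≤ 2 ^ n := Nat.pow_le_pow_right (by norm_num) (by omega)
  have hu2 : u < 2 ^ n := by omega
  have hv2 : v < 2 ^ n := by omega
  have hfu : fstar n u = padicValNat 2 u + 1 := by
    rw [fstar_eq hu1 (by omega), Lv_small (by omega)]
  have hfv : fstar n v = padicValNat 2 v + 1 := by
    rw [fstar_eq (by omega) (by omega), Lv_small (by omega)]
  have hval : padicValNat 2 u = padicValNat 2 v := by omega
  obtain ⟨t0, ht1, ht2, ht3⟩ := exists_between (by omega) (by omega) huv hval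
  -- max of Lv over Ioo u v
  obtain ⟨z, hzmem, hzmax⟩ := Finset.exists_max_image (Finset.Ioo u v) (Lv n)
    ⟨t0, Finset.mem_Ioo.2 ⟨ht1, ht2⟩⟩
  rw [Finset.mem_Ioo] at hzmem
  have hz2 : z < 2 ^ n := by omega
  have hLz : fstar n u < Lv n z := by
    have h1 : Lv n t0 ≤ Lv n z := hzmax t0 (Finset.mem_Ioo.2 ⟨ht1, ht2⟩)
    have h2 : Lv n t0 = padicValNat 2 t0 + 1 := Lv_small (by omega)
    omega
  rcases walk_cross (z := z) p (by omega) (by omega) with hz | ⟨a, b, hab, ha, hb, h3, h4⟩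
  · have h' : fstar n z = Lv n z := fstar_eq (x := z) (by omega) (by omega)
    exact ⟨z, hz, by omega⟩
  · have hadj := hab
    rw [gstar_adj] at hadj
    obtain ⟨hne, hrel | hrel⟩ := hadj
    swap
    · exact absurd hrel.2.1 (by omega)
    obtain ⟨ha1, hab', hb1, hcl⟩ := hrel
    rcases hcl with hb2 | hcl
    · have hfb : fstar n b = n + 1 := by
        rw [fstar_eq (x := b) (by omega) (by omega), hb2]; exact if_pos rfl
      have hvalu := val_lt_of_lt_pow (x := u) (by omega) hu2
      exact ⟨b, hb, by omega⟩
    · have hzin := hcl z h3 h4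
      rcases Nat.le_total (Lv n a) (Lv n b) with hmx | hmx
      · rw [max_eq_right hmx] at hzin
        have h' : fstar n b = Lv n b := fstar_eq (x := b) (by omega) (by omega)
        exact ⟨b, hb, by omega⟩
      · rw [max_eq_left hmx] at hzin
        have h' : fstar n a = Lv n a := fstar_eq (x := a) (by omega) (by omega)
        exact ⟨a, ha, by omega⟩

lemma isRanking_fstar {n : ℕ} (hn : 3 < n) : IsRanking (Gstar n) (n + 1) (fstar n) := by
  have hm : (16:ℕ) ≤ 2 ^ n := by
    calc (16:ℕ) = 2 ^ 4 := by norm_num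
    _ ≤ 2 ^ n := Nat.pow_le_pow_right (by norm_num) (by omega)
  refine ⟨fstar_bounds n, fun u v hne heq p _ => ?_⟩
  by_cases hu : 1 ≤ u ∧ u ≤ 2 ^ n
  swap
  · exfalso
    have hiso : ∀ w, ¬ (Gstar n).Adj u w := by
      intro w hw
      have := gstar_range hw
      exact hu ⟨this.1, this.2.1⟩
    exact hne (no_walk_from_isolated hiso p).symm
  by_cases hv : 1 ≤ v ∧ v ≤ 2 ^ n
  swap
  · exfalso
    have hiso : ∀ w, ¬ (Gstar n).Adj v w := by
      intro w hw
      have := gstar_range hw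
      exact hv ⟨this.1, this.2.1⟩
    exact hne (no_walk_from_isolated hiso p.reverse)
  by_cases hum : u = 2 ^ n
  · exfalso
    subst hum
    have h1 : fstar n (2^n) = n + 1 := by rw [fstar_eq (by omega) le_rfl]; exact if_pos rfl
    have h2 : fstar n v ≤ n := by
      rw [fstar_eq hv.1 hv.2]
      exact Lv_le hv.1 (by omega)
    omega
  by_cases hvm : v = 2 ^ n
  · exfalso
    subst hvm
    have h1 : fstar n (2^n) = n + 1 := by rw [fstar_eq (by omega) le_rfl]; exact if_pos rfl
    have h2 : fstar n u ≤ n := by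
      rw [fstar_eq hu.1 hu.2]
      exact Lv_le hu.1 (by omega)
    omega
  rcases Nat.lt_or_ge u v with hlt | hge
  · exact fstar_aux hn hu.1 hlt (by omega) heq p
  · have hlt : v < u := by omega
    obtain ⟨w, hw, hlw⟩ := fstar_aux hn hv.1 hlt (by omega) heq.symm p.reverse
    rw [Walk.support_reverse, List.mem_reverse] at hw
    exact ⟨w, hw, by omega⟩

/-! ### the cycle graph -/

lemma cyc_adj_succ {m i : ℕ} (h1 : 1 ≤ i) (h2 : i + 1 ≤ m) : (cycleG m).Adj i (i+1) := by
  rw [cycleG, SimpleGraph.fromRel_adj]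
  exact ⟨by omega, Or.inl (Or.inl ⟨h1, rfl, h2⟩)⟩

lemma cyc_adj_last {m : ℕ} (hm : 2 ≤ m) : (cycleG m).Adj m 1 := by
  rw [cycleG, SimpleGraph.fromRel_adj]
  exact ⟨by omega, Or.inl (Or.inr ⟨rfl, rfl⟩)⟩

/-- the edge finset of the cycle -/
def CEF (m : ℕ) : Finset (Sym2 ℕ) :=
  ((Finset.Icc 1 (m-1)).image fun i => s(i, i+1)) ∪ {s(m, 1)}

lemma mem_CEF {m : ℕ} (e : Sym2 ℕ) :
    e ∈ CEF m ↔ (∃ i, 1 ≤ i ∧ i + 1 ≤ m ∧ e = s(i, i+1)) ∨ e = s(m, 1) := by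
  unfold CEF
  simp only [Finset.mem_union, Finset.mem_image, Finset.mem_Icc, Finset.mem_singleton]
  constructor
  · rintro (⟨i, ⟨hi1, hi2⟩, rfl⟩ | rfl)
    · exact Or.inl ⟨i, hi1, by omega, rfl⟩
    · exact Or.inr rfl
  · rintro (⟨i, hi1, hi2, rfl⟩ | rfl)
    · exact Or.inl ⟨i, ⟨hi1, by omega⟩, rfl⟩
    · exact Or.inr rfl

lemma edgeSet_cycle {m : ℕ} (hm : 3 ≤ m) : (cycleG m).edgeSet = ↑(CEF m) := by
  ext e
  induction e with
  | _ a b =>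
    rw [SimpleGraph.mem_edgeSet, Finset.mem_coe, mem_CEF, cycleG, SimpleGraph.fromRel_adj]
    constructor
    · rintro ⟨hne, (⟨h1, rfl, h3⟩ | ⟨rfl, rfl⟩) | (⟨h1, rfl, h3⟩ | ⟨rfl, rfl⟩)⟩
      · exact Or.inl ⟨a, h1, h3, rfl⟩
      · exact Or.inr rfl
      · exact Or.inl ⟨b, h1, h3, Sym2.eq_swap⟩
      · exact Or.inr Sym2.eq_swap
    · rintro (⟨i, h1, h2, he⟩ | he)
      · rw [Sym2.eq_iff] at he
        rcases he with ⟨rfl, rfl⟩ | ⟨rfl, rfl⟩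
        · exact ⟨by omega, Or.inl (Or.inl ⟨h1, rfl, h2⟩)⟩
        · exact ⟨by omega, Or.inr (Or.inl ⟨h1, rfl, h2⟩)⟩
      · rw [Sym2.eq_iff] at he
        rcases he with ⟨rfl, rfl⟩ | ⟨rfl, rfl⟩
        · exact ⟨by omega, Or.inl (Or.inr ⟨rfl, rfl⟩)⟩
        · exact ⟨by omega, Or.inr (Or.inr ⟨rfl, rfl⟩)⟩

lemma card_CEF {m : ℕ} (hm : 3 ≤ m) : (CEF m).card = m := by
  unfold CEF
  rw [Finset.card_union_of_disjoint, Finset.card_image_of_injOn, Finset.card_singleton]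
  · rw [Nat.card_Icc]; omega
  · intro x hx y hy hxy
    rw [Sym2.eq_iff] at hxy
    rcases hxy with ⟨h1, h2⟩ | ⟨h1, h2⟩ <;> omega
  · rw [Finset.disjoint_singleton_right]
    intro h
    rw [Finset.mem_image] at h
    obtain ⟨i, hi, he⟩ := h
    rw [Finset.mem_Icc] at hi
    rw [Sym2.eq_iff] at he
    rcases he with ⟨h1, h2⟩ | ⟨h1, h2⟩ <;> omega

lemma cycle_le_gstar {n : ℕ} (hn : 3 < n) : cycleG (2 ^ n) ≤ Gstar n := by
  have hm : (16:ℕ) ≤ 2 ^ n := by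
    calc (16:ℕ) = 2 ^ 4 := by norm_num
    _ ≤ 2 ^ n := Nat.pow_le_pow_right (by norm_num) (by omega)
  intro a b hab
  rw [cycleG, SimpleGraph.fromRel_adj] at hab
  rw [gstar_adj]
  obtain ⟨hne, h | h⟩ := hab
  · rcases h with ⟨h1, rfl, h3⟩ | ⟨rfl, rfl⟩
    · exact ⟨hne, Or.inl ⟨h1, by omega, h3, Or.inr (fun t ht1 ht2 => by omega)⟩⟩
    · exact ⟨hne, Or.inr ⟨by omega, by omega, le_rfl, Or.inl rfl⟩⟩
  · rcases h with ⟨h1, rfl, h3⟩ | ⟨rfl, rfl⟩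
    · exact ⟨hne, Or.inr ⟨h1, by omega, h3, Or.inr (fun t ht1 ht2 => by omega)⟩⟩
    · exact ⟨hne, Or.inl ⟨by omega, by omega, le_rfl, Or.inl rfl⟩⟩

/-! ### rank numbers -/

lemma rank_le_of_ranking {G : SimpleGraph ℕ} {k : ℕ} {f : ℕ → ℕ} (h : IsRanking G k f) :
    rankNumber G ≤ k :=
  Nat.sInf_le ⟨f, h⟩

lemma ranking_cycle_big {n k : ℕ} (hn : 3 < n) {f : ℕ → ℕ}
    (hf : IsRanking (cycleG (2^n)) k f) : n + 1 ≤ k := by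
  have hm : (16:ℕ) ≤ 2 ^ n := by
    calc (16:ℕ) = 2 ^ 4 := by norm_num
    _ ≤ 2 ^ n := Nat.pow_le_pow_right (by norm_num) (by omega)
  have hb := arc_bound hf (a := 1) (l := 2^n - 1) (j := k)
    (fun i hi => by
      have := cyc_adj_succ (m := 2^n) (i := 1 + i) (by omega) (by omega)
      convert this using 2 <;> omega)
    (fun i _ => (hf.1 (1 + i)).2)
  have : 2 ^ n < 2 ^ k := by omega
  by_contra h'
  have : (2:ℕ) ^ k ≤ 2 ^ n := Nat.pow_le_pow_right (by norm_num) (by omega)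
  omega

lemma rank_cycle {n : ℕ} (hn : 3 < n) : rankNumber (cycleG (2^n)) = n + 1 := by
  have hr : IsRanking (cycleG (2^n)) (n+1) (fstar n) :=
    isRanking_mono (cycle_le_gstar hn) (isRanking_fstar hn)
  apply le_antisymm (rank_le_of_ranking hr)
  have hne : {k | ∃ f : ℕ → ℕ, IsRanking (cycleG (2^n)) k f}.Nonempty := ⟨n+1, fstar n, hr⟩
  obtain ⟨f, hf⟩ := Nat.sInf_mem hne
  exact ranking_cycle_big hn hf

lemma rank_gstar {n : ℕ} (hn : 3 < n) : rankNumber (Gstar n) = n + 1 := by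
  apply le_antisymm (rank_le_of_ranking (isRanking_fstar hn))
  have hne : {k | ∃ f : ℕ → ℕ, IsRanking (Gstar n) k f}.Nonempty :=
    ⟨n+1, fstar n, isRanking_fstar hn⟩
  obtain ⟨f, hf⟩ := Nat.sInf_mem hne
  exact ranking_cycle_big hn (isRanking_mono (cycle_le_gstar hn) hf)

/-! ### counting the extremal edges -/

open scoped Classical in
noncomputable def cntSet (k o : ℕ) : Finset (ℕ × ℕ) :=
  ((Finset.Ioo o (o + 2^k)) ×ˢ (Finset.Ioo o (o + 2^k))).filter
    (fun q => q.1 < q.2 ∧ ∀ t, q.1 < t → t < q.2 →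
      padicValNat 2 t + 1 < max (padicValNat 2 q.1 + 1) (padicValNat 2 q.2 + 1))

lemma mem_cntSet {k o : ℕ} {q : ℕ × ℕ} :
    q ∈ cntSet k o ↔ (o < q.1 ∧ q.1 < o + 2^k) ∧ (o < q.2 ∧ q.2 < o + 2^k) ∧
      q.1 < q.2 ∧ ∀ t, q.1 < t → t < q.2 →
        padicValNat 2 t + 1 < max (padicValNat 2 q.1 + 1) (padicValNat 2 q.2 + 1) := by
  classical
  unfold cntSet
  rw [Finset.mem_filter, Finset.mem_product, Finset.mem_Ioo, Finset.mem_Ioo]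
  tauto

lemma cntSet_base (o : ℕ) : (cntSet 1 o).card = 0 := by
  rw [Finset.card_eq_zero]
  ext q
  simp only [Finset.notMem_empty, iff_false]
  intro hq
  rw [mem_cntSet] at hq
  omega

lemma cnt_rec {k o : ℕ} (hk : 1 ≤ k) (ho : 2^(k+1) ∣ o) :
    (cntSet (k+1) o).card + 2 =
      (cntSet k o).card + (cntSet k (o + 2^k)).card + 2^(k+1) := by
  classical
  set m := o + 2^k with hmdef
  have hpow : (0:ℕ) < 2^k := by positivity
  have hpow2 : (2:ℕ)^(k+1) = 2^k + 2^k := by rw [pow_succ]; omega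
  have hvm : padicValNat 2 m = k := by
    rw [hmdef, val_add_pow ho (by omega) (by omega)]
    exact padicValNat.prime_pow k
  have hvt : ∀ t, o < t → t < o + 2^(k+1) → t ≠ m → padicValNat 2 t < k := by
    intro t h1 h2 h3
    have hv : padicValNat 2 (o + (t - o)) = padicValNat 2 (t - o) :=
      val_add_pow ho (by omega) (by omega)
    have ht : o + (t - o) = t := by omega
    rw [ht] at hv
    by_contra h'
    have hdvd : 2^k ∣ (t - o) := by
      rw [hv] at h'
      exact dvd_trans (pow_dvd_pow 2 (by omega)) pow_padicValNat_dvd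
    obtain ⟨c, hc⟩ := hdvd
    have hc2 : c < 2 := by
      by_contra h''
      have : 2^k * 2 ≤ 2^k * c := Nat.mul_le_mul_left _ (by omega)
      omega
    rcases (by omega : c = 0 ∨ c = 1) with rfl | rfl
    · simp at hc; omega
    · simp at hc; omega
  set A := cntSet (k+1) o with hAdef
  have hsplit1 : (A.filter (fun q => q.2 < m)).card
      + (A.filter (fun q => ¬ q.2 < m)).card = A.card :=
    Finset.card_filter_add_card_filter_not _
  have hsplit2 : ((A.filter (fun q => ¬ q.2 < m)).filter (fun q => m < q.1)).card
      + ((A.filter (fun q => ¬ q.2 < m)).filter (fun q => ¬ m < q.1)).card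
      = (A.filter (fun q => ¬ q.2 < m)).card :=
    Finset.card_filter_add_card_filter_not _
  have hE1 : A.filter (fun q => q.2 < m) = cntSet k o := by
    ext q
    rw [Finset.mem_filter, hAdef, mem_cntSet, mem_cntSet]
    constructor
    · rintro ⟨⟨⟨h1a, h1b⟩, ⟨h2a, h2b⟩, h3, h4⟩, h5⟩
      exact ⟨⟨by omega, by omega⟩, ⟨by omega, by omega⟩, h3, h4⟩
    · rintro ⟨⟨h1a, h1b⟩, ⟨h2a, h2b⟩, h3, h4⟩
      exact ⟨⟨⟨by omega, by omega⟩, ⟨by omega, by omega⟩, h3, h4⟩, by omega⟩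
  have hE2 : (A.filter (fun q => ¬ q.2 < m)).filter (fun q => m < q.1) = cntSet k m := by
    ext q
    rw [Finset.mem_filter, Finset.mem_filter, hAdef, mem_cntSet, mem_cntSet]
    constructor
    · rintro ⟨⟨⟨⟨h1a, h1b⟩, ⟨h2a, h2b⟩, h3, h4⟩, h5⟩, h6⟩
      exact ⟨⟨by omega, by omega⟩, ⟨by omega, by omega⟩, h3, h4⟩
    · rintro ⟨⟨h1a, h1b⟩, ⟨h2a, h2b⟩, h3, h4⟩
      exact ⟨⟨⟨⟨by omega, by omega⟩, ⟨by omega, by omega⟩, h3, h4⟩, by omega⟩, by omega⟩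
  have hE3 : (A.filter (fun q => ¬ q.2 < m)).filter (fun q => ¬ m < q.1) =
      ({m} ×ˢ Finset.Ioo m (o + 2^(k+1))) ∪ ((Finset.Ioo o m) ×ˢ {m}) := by
    ext q
    rw [Finset.mem_filter, Finset.mem_filter, hAdef, mem_cntSet, Finset.mem_union,
      Finset.mem_product, Finset.mem_product, Finset.mem_singleton, Finset.mem_Ioo,
      Finset.mem_Ioo, Finset.mem_singleton]
    constructor
    · rintro ⟨⟨⟨⟨h1a, h1b⟩, ⟨h2a, h2b⟩, h3, h4⟩, h5⟩, h6⟩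
      rcases eq_or_lt_of_le (show q.1 ≤ m by omega) with he1 | hlt1
      · left; exact ⟨he1, by omega, h2b⟩
      · rcases eq_or_lt_of_le (show m ≤ q.2 by omega) with he2 | hlt2
        · right; exact ⟨⟨h1a, hlt1⟩, he2.symm⟩
        · exfalso
          have hin := h4 m hlt1 hlt2
          have hv1 := hvt q.1 h1a h1b (by omega)
          have hv2 := hvt q.2 h2a h2b (by omega)
          rw [hvm] at hin
          have hmax : max (padicValNat 2 q.1 + 1) (padicValNat 2 q.2 + 1) ≤ k :=
            max_le (by omega) (by omega)
          omega
    · rintro (⟨hq1, hq2a, hq2b⟩ | ⟨⟨hq1a, hq1b⟩, hq2⟩)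
      · refine ⟨⟨⟨⟨by omega, by omega⟩, ⟨by omega, by omega⟩, by omega, ?_⟩, by omega⟩,
          by omega⟩
        intro t ht1 ht2
        have hvt' := hvt t (by omega) (by omega) (by omega)
        rw [hq1, hvm]
        have := le_max_left (k + 1) (padicValNat 2 q.2 + 1)
        omega
      · refine ⟨⟨⟨⟨by omega, by omega⟩, ⟨by omega, by omega⟩, by omega, ?_⟩, by omega⟩,
          by omega⟩
        intro t ht1 ht2
        have hvt' := hvt t (by omega) (by omega) (by omega)
        rw [hq2, hvm]
        have := le_max_right (padicValNat 2 q.1 + 1) (k + 1)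
        omega
  have hcard3 : (({m} ×ˢ Finset.Ioo m (o + 2^(k+1))) ∪ ((Finset.Ioo o m) ×ˢ {m})).card
      = 2^(k+1) - 2 := by
    rw [Finset.card_union_of_disjoint, Finset.card_product, Finset.card_product,
      Finset.card_singleton, Nat.card_Ioo, Nat.card_Ioo]
    · omega
    · rw [Finset.disjoint_left]
      rintro q hq1 hq2
      rw [Finset.mem_product, Finset.mem_singleton] at hq1
      rw [Finset.mem_product, Finset.mem_Ioo] at hq2
      omega
  rw [hE1] at hsplit1
  rw [hE2, hE3, hcard3] at hsplit2
  omega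

lemma cnt_eq : ∀ k o, 1 ≤ k → 2^k ∣ o → (cntSet k o).card + 2^(k+1) = k * 2^k + 2 := by
  intro k
  induction k with
  | zero => omega
  | succ k ih =>
    intro o h1 ho
    rcases Nat.eq_zero_or_pos k with rfl | hk
    · rw [cntSet_base]; norm_num
    · have ho' : (2:ℕ)^k ∣ o := dvd_trans (pow_dvd_pow 2 (by omega)) ho
      have ho2 : (2:ℕ)^k ∣ (o + 2^k) := Dvd.dvd.add ho' dvd_rfl
      have e1 := ih o hk ho'
      have e2 := ih (o + 2^k) hk ho2
      have e3 := cnt_rec hk ho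
      have e4 : (k+1) * 2^(k+1) = 2 * (k * 2^k) + 2 * 2^k := by rw [pow_succ]; ring
      have e5 : (2:ℕ)^(k+1) = 2 * 2^k := by rw [pow_succ]; ring
      have e6 : (2:ℕ)^(k+2) = 2 * 2^(k+1) := by rw [pow_succ (n := k+1)]; ring
      omega

/-! ### the extremal edge finsets -/

open scoped Classical in
noncomputable def PP (n : ℕ) : Finset (ℕ × ℕ) :=
  ((Finset.Icc 1 (2^n)) ×ˢ (Finset.Icc 1 (2^n))).filter (fun q => relS n q.1 q.2)

lemma mem_PP {n : ℕ} {q : ℕ × ℕ} : q ∈ PP n ↔ relS n q.1 q.2 := by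
  classical
  unfold PP
  rw [Finset.mem_filter, Finset.mem_product, Finset.mem_Icc, Finset.mem_Icc]
  constructor
  · tauto
  · intro h
    obtain ⟨h1, h2, h3, h4⟩ := h
    exact ⟨⟨⟨h1, by omega⟩, ⟨by omega, h3⟩⟩, h1, h2, h3, h4⟩

lemma card_PP {n : ℕ} (hn : 3 < n) : (PP n).card + 2^(n+1) = n * 2^n + 2^n + 1 := by
  classical
  have hm : (16:ℕ) ≤ 2 ^ n := by
    calc (16:ℕ) = 2 ^ 4 := by norm_num
    _ ≤ 2 ^ n := Nat.pow_le_pow_right (by norm_num) (by omega)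
  have hsplit : ((PP n).filter (fun q => q.2 = 2^n)).card
      + ((PP n).filter (fun q => ¬ q.2 = 2^n)).card = (PP n).card :=
    Finset.card_filter_add_card_filter_not _
  have hE1 : (PP n).filter (fun q => q.2 = 2^n) = (Finset.Ico 1 (2^n)) ×ˢ {2^n} := by
    ext q
    rw [Finset.mem_filter, mem_PP, Finset.mem_product, Finset.mem_Ico, Finset.mem_singleton]
    constructor
    · rintro ⟨⟨h1, h2, h3, -⟩, h5⟩
      exact ⟨⟨h1, by omega⟩, h5⟩
    · rintro ⟨⟨h1, h2⟩, h3⟩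
      exact ⟨⟨h1, by omega, by omega, Or.inl h3⟩, h3⟩
  have hE2 : (PP n).filter (fun q => ¬ q.2 = 2^n) = cntSet n 0 := by
    ext q
    rw [Finset.mem_filter, mem_PP, mem_cntSet]
    constructor
    · rintro ⟨⟨h1, h2, h3, hcl⟩, h5⟩
      rcases hcl with hcl | hcl
      · exact absurd hcl h5
      refine ⟨⟨by omega, by omega⟩, ⟨by omega, by omega⟩, h2, ?_⟩
      intro t ht1 ht2
      have := hcl t ht1 ht2
      rw [Lv_small (by omega), Lv_small (by omega), Lv_small (by omega)] at this
      exact this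
    · rintro ⟨⟨h1a, h1b⟩, ⟨h2a, h2b⟩, h3, h4⟩
      refine ⟨⟨by omega, h3, by omega, Or.inr ?_⟩, by omega⟩
      intro t ht1 ht2
      have := h4 t ht1 ht2
      rw [Lv_small (by omega), Lv_small (by omega), Lv_small (by omega)]
      exact this
  have hc1 : ((Finset.Ico 1 (2^n)) ×ˢ ({(2:ℕ)^n} : Finset ℕ)).card = 2^n - 1 := by
    rw [Finset.card_product, Finset.card_singleton, Nat.card_Ico]
    omega
  have hc2 := cnt_eq n 0 (by omega) (dvd_zero _)
  rw [hE1, hE2, hc1] at hsplit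
  omega

open scoped Classical in
noncomputable def Fstar (n : ℕ) : Finset (Sym2 ℕ) := (PP n).image (fun q => s(q.1, q.2))

lemma card_Fstar {n : ℕ} : (Fstar n).card = (PP n).card := by
  classical
  apply Finset.card_image_of_injOn
  intro q hq q' hq' he
  rw [Finset.mem_coe, mem_PP] at hq hq'
  rw [Sym2.eq_iff] at he
  have h1 := hq.2.1
  have h2 := hq'.2.1
  rcases he with ⟨ha, hb⟩ | ⟨ha, hb⟩
  · exact Prod.ext ha hb
  · exfalso; omega

lemma mem_Fstar_iff {n : ℕ} {a b : ℕ} :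
    s(a, b) ∈ Fstar n ↔ relS n a b ∨ relS n b a := by
  classical
  unfold Fstar
  rw [Finset.mem_image]
  constructor
  · rintro ⟨q, hq, he⟩
    rw [mem_PP] at hq
    rw [Sym2.eq_iff] at he
    rcases he with ⟨ha, hb⟩ | ⟨ha, hb⟩
    · left; rw [← ha, ← hb]; exact hq
    · right; rw [← ha, ← hb]; exact hq
  · rintro (h | h)
    · exact ⟨(a, b), mem_PP.2 h, rfl⟩
    · exact ⟨(b, a), mem_PP.2 h, Sym2.eq_swap⟩

lemma gstar_adj_iff_fstar {n : ℕ} {a b : ℕ} :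
    (Gstar n).Adj a b ↔ a ≠ b ∧ s(a, b) ∈ Fstar n := by
  rw [gstar_adj, mem_Fstar_iff]

lemma edgeSet_gstar {n : ℕ} : (Gstar n).edgeSet = ↑(Fstar n) := by
  ext e
  induction e with
  | _ a b =>
    rw [SimpleGraph.mem_edgeSet, Finset.mem_coe, gstar_adj_iff_fstar]
    constructor
    · exact fun h => h.2
    · intro h
      refine ⟨?_, h⟩
      rw [mem_Fstar_iff] at h
      rcases h with h | h
      · exact Nat.ne_of_lt h.2.1
      · exact Nat.ne_of_gt h.2.1

lemma CEF_subset_Fstar {n : ℕ} (hn : 3 < n) : CEF (2^n) ⊆ Fstar n := by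
  have hm : (16:ℕ) ≤ 2 ^ n := by
    calc (16:ℕ) = 2 ^ 4 := by norm_num
    _ ≤ 2 ^ n := Nat.pow_le_pow_right (by norm_num) (by omega)
  intro e he
  rw [mem_CEF] at he
  rcases he with ⟨i, h1, h2, rfl⟩ | rfl
  · rw [mem_Fstar_iff]
    exact Or.inl ⟨h1, by omega, h2, Or.inr (fun t ht1 ht2 => by omega)⟩
  · rw [show s((2:ℕ)^n, 1) = s(1, (2:ℕ)^n) from Sym2.eq_swap, mem_Fstar_iff]
    exact Or.inl ⟨le_rfl, by omega, le_rfl, Or.inl rfl⟩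

noncomputable def Sstar (n : ℕ) : Finset (Sym2 ℕ) := Fstar n \ CEF (2^n)

lemma card_Sstar {n : ℕ} (hn : 3 < n) : (Sstar n).card = (n - 2) * 2^n + 1 := by
  have hm : (16:ℕ) ≤ 2 ^ n := by
    calc (16:ℕ) = 2 ^ 4 := by norm_num
    _ ≤ 2 ^ n := Nat.pow_le_pow_right (by norm_num) (by omega)
  have h1 : (Sstar n).card = (Fstar n).card - (CEF (2^n)).card :=
    Finset.card_sdiff_of_subset (CEF_subset_Fstar hn)
  rw [card_CEF (by omega), card_Fstar] at h1
  have h2 := card_PP hn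
  have h3 : (2:ℕ)^(n+1) = 2^n + 2^n := by rw [pow_succ]; omega
  have h4 : (n - 2) * 2^n + 2 * 2^n = n * 2^n := by
    rw [← add_mul]
    congr 1
    omega
  omega

lemma sup_Sstar_eq {n : ℕ} (hn : 3 < n) :
    cycleG (2^n) ⊔ SimpleGraph.fromEdgeSet ((Sstar n : Set (Sym2 ℕ))) = Gstar n := by
  have hm : (3:ℕ) ≤ 2 ^ n := by
    have : (16:ℕ) ≤ 2 ^ n := by
      calc (16:ℕ) = 2 ^ 4 := by norm_num
      _ ≤ 2 ^ n := Nat.pow_le_pow_right (by norm_num) (by omega)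
    omega
  ext a b
  rw [SimpleGraph.sup_adj, SimpleGraph.fromEdgeSet_adj, Finset.mem_coe]
  constructor
  · rintro (h | ⟨h1, h2⟩)
    · exact cycle_le_gstar hn h
    · rw [Sstar, Finset.mem_sdiff] at h1
      rw [gstar_adj_iff_fstar]
      exact ⟨h2, h1.1⟩
  · intro h
    have hne := h.ne
    rw [gstar_adj_iff_fstar] at h
    by_cases hc : s(a, b) ∈ CEF (2^n)
    · left
      have : s(a, b) ∈ (cycleG (2^n)).edgeSet := by
        rw [edgeSet_cycle hm]
        exact hc
      exact this
    · right
      rw [Sstar, Finset.mem_sdiff]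
      exact ⟨⟨h.2, hc⟩, hne⟩

/-! ### upper bound -/

def loPair (f : ℕ → ℕ) : Sym2 ℕ → ℕ × ℕ :=
  Sym2.lift ⟨fun a b =>
    if f a < f b then (a, f b) else if f b < f a then (b, f a) else (min a b, f a),
    by
      intro a b
      dsimp only
      rcases lt_trichotomy (f a) (f b) with h | h | h
      · simp [h, asymm h]
      · simp [h, min_comm a b]
      · simp [h, asymm h]⟩

lemma loPair_eq {f : ℕ → ℕ} {a b : ℕ} (h : f a < f b) : loPair f s(a, b) = (a, f b) := by
  unfold loPair
  rw [Sym2.lift_mk]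
  exact if_pos h

lemma sum_f_lower {n : ℕ} (hn : 3 < n) {f : ℕ → ℕ}
    (hfc : IsRanking (cycleG (2^n)) (n+1) f) :
    2^(n+1) ≤ (∑ u ∈ Finset.Icc 1 (2^n), f u) + 1 := by
  classical
  -- the count of vertices with label > j is at least 2^(n-j)
  have harc : ∀ j, j ≤ n → ∀ i, i < 2^(n-j) →
      ∃ u, i * 2^j + 1 ≤ u ∧ u ≤ (i+1) * 2^j ∧ j < f u := by
    intro j hj i hi
    by_contra hno
    push_neg at hno
    have hpj : (0:ℕ) < 2^j := by positivity
    have hkey : (i+1) * 2^j ≤ 2^n := by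
      have h1 : i + 1 ≤ 2^(n-j) := hi
      have h2 : (i+1) * 2^j ≤ 2^(n-j) * 2^j := Nat.mul_le_mul_right _ h1
      have h3 : (2:ℕ)^(n-j) * 2^j = 2^n := by
        rw [← pow_add]
        congr 1
        omega
      omega
    have hdistrib : (i+1) * 2^j = i * 2^j + 2^j := by ring
    have hb := arc_bound hfc (a := i * 2^j + 1) (l := 2^j - 1) (j := j)
      (fun s hs => cyc_adj_succ (by omega) (by omega))
      (fun s hs => hno (i * 2^j + 1 + s) (by omega) (by omega))
    omega
  have hmj : ∀ j ∈ Finset.range (n+1),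
      2^(n-j) ≤ ((Finset.Icc 1 (2^n)).filter (fun u => j < f u)).card := by
    intro j hj
    rw [Finset.mem_range] at hj
    have hj' : j ≤ n := by omega
    set g : ℕ → ℕ := fun i => if h : i < 2^(n-j) then (harc j hj' i h).choose else 0 with hg
    have hspec : ∀ i, i < 2^(n-j) → i * 2^j + 1 ≤ g i ∧ g i ≤ (i+1) * 2^j ∧ j < f (g i) := by
      intro i hi
      rw [hg]
      simp only [dif_pos hi]
      exact (harc j hj' i hi).choose_spec
    have hpj : (0:ℕ) < 2^j := by positivity
    have hkey : ∀ i, i < 2^(n-j) → (i+1) * 2^j ≤ 2^n := by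
      intro i hi
      have h2 : (i+1) * 2^j ≤ 2^(n-j) * 2^j := Nat.mul_le_mul_right _ hi
      have h3 : (2:ℕ)^(n-j) * 2^j = 2^n := by
        rw [← pow_add]; congr 1; omega
      omega
    have hcard := Finset.card_le_card_of_injOn
      (s := Finset.range (2^(n-j)))
      (t := (Finset.Icc 1 (2^n)).filter (fun u => j < f u)) g
      (fun i hi => by
        rw [Finset.mem_coe, Finset.mem_range] at hi
        obtain ⟨h1, h2, h3⟩ := hspec i hi
        rw [Finset.mem_coe, Finset.mem_filter, Finset.mem_Icc]
        exact ⟨⟨by omega, by have := hkey i hi; omega⟩, h3⟩)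
      (fun i hi i' hi' he => by
        rw [Finset.mem_coe, Finset.mem_range] at hi hi'
        obtain ⟨h1, h2, h3⟩ := hspec i hi
        obtain ⟨h1', h2', h3'⟩ := hspec i' hi'
        rw [he] at h1 h2
        by_contra hne
        rcases Nat.lt_or_ge i i' with hlt | hge
        · have : (i+1) * 2^j ≤ i' * 2^j := Nat.mul_le_mul_right _ (by omega)
          omega
        · have hlt : i' < i := by omega
          have : (i'+1) * 2^j ≤ i * 2^j := Nat.mul_le_mul_right _ (by omega)
          omega)
    rw [Finset.card_range] at hcard
    exact hcard
  -- now sum over j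
  have hface : ∀ u ∈ Finset.Icc 1 (2^n), f u =
      ∑ j ∈ Finset.range (n+1), if j < f u then 1 else 0 := by
    intro u _
    rw [← Finset.card_filter]
    have : (Finset.range (n+1)).filter (fun j => j < f u) = Finset.range (f u) := by
      ext j
      rw [Finset.mem_filter, Finset.mem_range, Finset.mem_range]
      have := (hfc.1 u).2
      omega
    rw [this, Finset.card_range]
  have hsum : (∑ u ∈ Finset.Icc 1 (2^n), f u) =
      ∑ j ∈ Finset.range (n+1), ((Finset.Icc 1 (2^n)).filter (fun u => j < f u)).card := by
    rw [Finset.sum_congr rfl hface, Finset.sum_comm]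
    apply Finset.sum_congr rfl
    intro j _
    rw [Finset.card_filter]
  have hgeo : (∑ j ∈ Finset.range (n+1), (2:ℕ)^(n-j)) = 2^(n+1) - 1 := by
    have h1 := Finset.sum_range_reflect (fun j => (2:ℕ)^j) (n+1)
    simp only [Nat.add_sub_cancel] at h1
    have h2 := geom_two (n+1)
    omega
  have hle : (∑ j ∈ Finset.range (n+1), (2:ℕ)^(n-j)) ≤
      ∑ j ∈ Finset.range (n+1), ((Finset.Icc 1 (2^n)).filter (fun u => j < f u)).card :=
    Finset.sum_le_sum hmj
  have hp : (0:ℕ) < 2^(n+1) := by positivity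
  omega

lemma upper_bound {n : ℕ} (hn : 3 < n) {S : Finset (Sym2 ℕ)}
    (hS : ∀ e ∈ S, ¬e.IsDiag ∧ (∀ x ∈ e, x ∈ Set.Icc 1 (2^n)) ∧ e ∉ (cycleG (2^n)).edgeSet)
    (hrk : rankNumber (cycleG (2^n) ⊔ SimpleGraph.fromEdgeSet (S : Set (Sym2 ℕ)))
      = rankNumber (cycleG (2^n))) :
    S.card ≤ (n - 2) * 2^n + 1 := by
  classical
  have hm : (16:ℕ) ≤ 2 ^ n := by
    calc (16:ℕ) = 2 ^ 4 := by norm_num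
    _ ≤ 2 ^ n := Nat.pow_le_pow_right (by norm_num) (by omega)
  set H := cycleG (2^n) ⊔ SimpleGraph.fromEdgeSet (S : Set (Sym2 ℕ)) with hHdef
  rw [rank_cycle hn] at hrk
  have hne : {k | ∃ f : ℕ → ℕ, IsRanking H k f}.Nonempty := by
    by_contra h
    rw [Set.not_nonempty_iff_eq_empty] at h
    rw [rankNumber, h, Nat.sInf_empty] at hrk
    omega
  obtain ⟨f, hf⟩ := Nat.sInf_mem hne
  rw [← rankNumber] at hf
  rw [hrk] at hf
  have hfc : IsRanking (cycleG (2^n)) (n+1) f := isRanking_mono le_sup_left hf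
  set T := S ∪ CEF (2^n) with hTdef
  have hdisj : Disjoint S (CEF (2^n)) := by
    rw [Finset.disjoint_left]
    intro e he hce
    have h3 := (hS e he).2.2
    rw [edgeSet_cycle (by omega)] at h3
    exact h3 hce
  have hTcard : T.card = S.card + 2^n := by
    rw [hTdef, Finset.card_union_of_disjoint hdisj, card_CEF (by omega)]
  -- every edge of T has a representation
  have hrepr : ∀ e ∈ T, ∃ a b : ℕ, e = s(a, b) ∧ H.Adj a b ∧
      1 ≤ a ∧ a ≤ 2^n ∧ 1 ≤ b ∧ b ≤ 2^n ∧ f a < f b := by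
    intro e he
    have hbase : ∃ a b : ℕ, e = s(a, b) ∧ H.Adj a b ∧
        1 ≤ a ∧ a ≤ 2^n ∧ 1 ≤ b ∧ b ≤ 2^n := by
      rw [hTdef, Finset.mem_union] at he
      rcases he with he | he
      · obtain ⟨hd, hicc, -⟩ := hS e he
        induction e with
        | _ a b =>
          have hne' : a ≠ b := by
            intro h
            exact hd (by rw [h]; exact Sym2.mk_isDiag_iff.2 rfl)
          have ha := hicc a (Sym2.mem_mk_left a b)
          have hb := hicc b (Sym2.mem_mk_right a b)
          rw [Set.mem_Icc] at ha hb
          refine ⟨a, b, rfl, ?_, ha.1, ha.2, hb.1, hb.2⟩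
          rw [hHdef, SimpleGraph.sup_adj, SimpleGraph.fromEdgeSet_adj]
          exact Or.inr ⟨he, hne'⟩
      · rw [mem_CEF] at he
        rcases he with ⟨i, h1, h2, rfl⟩ | rfl
        · exact ⟨i, i+1, rfl, (SimpleGraph.sup_adj _ _ _ _).2 (Or.inl (cyc_adj_succ h1 h2)),
            h1, by omega, by omega, h2⟩
        · exact ⟨2^n, 1, rfl, (SimpleGraph.sup_adj _ _ _ _).2 (Or.inl (cyc_adj_last (by omega))),
            by omega, le_rfl, le_rfl, by omega⟩
    obtain ⟨a, b, rfl, hadj, ha1, ha2, hb1, hb2⟩ := hbase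
    have hne' : f a ≠ f b := adj_label_ne hf hadj
    rcases Nat.lt_or_ge (f a) (f b) with hlt | hge
    · exact ⟨a, b, rfl, hadj, ha1, ha2, hb1, hb2, hlt⟩
    · exact ⟨b, a, Sym2.eq_swap, hadj.symm, hb1, hb2, ha1, ha2, by omega⟩
  -- inject into the sigma set
  set B := (Finset.Icc 1 (2^n)).sigma (fun u => Finset.Ioc (f u) (n+1)) with hBdef
  have hinj : T.card ≤ B.card := by
    apply Finset.card_le_card_of_injOn
      (fun e => Sigma.mk (loPair f e).1 (loPair f e).2)
    · intro e he
      obtain ⟨a, b, rfl, hadj, ha1, ha2, hb1, hb2, hlt⟩ := hrepr e he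
      dsimp only
      rw [Finset.mem_coe, loPair_eq hlt, hBdef, Finset.mem_sigma, Finset.mem_Icc, Finset.mem_Ioc]
      exact ⟨⟨ha1, ha2⟩, hlt, (hf.1 b).2⟩
    · intro e he e' he' heq
      rw [Finset.mem_coe] at he he'
      obtain ⟨a, b, rfl, hadj, ha1, ha2, hb1, hb2, hlt⟩ := hrepr e he
      obtain ⟨a', b', rfl, hadj', ha1', ha2', hb1', hb2', hlt'⟩ := hrepr e' he'
      dsimp only at heq
      rw [loPair_eq hlt, loPair_eq hlt'] at heq
      rw [Sigma.mk.inj_iff] at heq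
      obtain ⟨rfl, hfb⟩ := heq
      have hfb' : f b = f b' := eq_of_heq hfb
      have := up_nbr_unique hf hadj hadj' hlt hfb'
      rw [this]
  have hBcard : B.card = ∑ u ∈ Finset.Icc 1 (2^n), (n + 1 - f u) := by
    rw [hBdef, Finset.card_sigma]
    apply Finset.sum_congr rfl
    intro u _
    rw [Nat.card_Ioc]
  have hsum1 : (∑ u ∈ Finset.Icc 1 (2^n), (n + 1 - f u))
      + (∑ u ∈ Finset.Icc 1 (2^n), f u) = (n+1) * 2^n := by
    rw [← Finset.sum_add_distrib]
    have : ∀ u ∈ Finset.Icc 1 (2^n), (n + 1 - f u) + f u = n + 1 := by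
      intro u _
      have := (hf.1 u).2
      omega
    rw [Finset.sum_congr rfl this, Finset.sum_const, Nat.card_Icc, smul_eq_mul]
    have h' : 2^n + 1 - 1 = 2^n := by omega
    rw [h', Nat.mul_comm]
  have hsum2 := sum_f_lower hn hfc
  have h1 : (n+1) * 2^n = n * 2^n + 2^n := by ring
  have h2 : (n-2) * 2^n + 2 * 2^n = n * 2^n := by
    rw [← add_mul]; congr 1; omega
  have h3 : (2:ℕ)^(n+1) = 2 * 2^n := by rw [pow_succ]; ring
  omega

end MuAux

/-- for every `n > 3`, `μ(C_{2^n}) = (n - 2)·2^n + 1`: the maximum number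
of edges that can be added to the cycle `C_{2^n}` without changing its rank number. -/
theorem mu_cycle (n : ℕ) (hn : 3 < n) :
    muOn (cycleG (2 ^ n)) (Set.Icc 1 (2 ^ n)) = (n - 2) * 2 ^ n + 1 := by
  classical
  have hm : (16:ℕ) ≤ 2 ^ n := by
    calc (16:ℕ) = 2 ^ 4 := by norm_num
    _ ≤ 2 ^ n := Nat.pow_le_pow_right (by norm_num) (by omega)
  have hmem : ((n - 2) * 2 ^ n + 1) ∈ {N | ∃ S : Finset (Sym2 ℕ), S.card = N ∧
      (∀ e ∈ S, ¬e.IsDiag ∧ (∀ x ∈ e, x ∈ Set.Icc 1 (2 ^ n)) ∧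
        e ∉ (cycleG (2 ^ n)).edgeSet) ∧
      rankNumber (cycleG (2 ^ n) ⊔ SimpleGraph.fromEdgeSet (↑S : Set (Sym2 ℕ)))
        = rankNumber (cycleG (2 ^ n))} := by
    refine ⟨MuAux.Sstar n, MuAux.card_Sstar hn, ?_, ?_⟩
    · intro e he
      rw [MuAux.Sstar, Finset.mem_sdiff] at he
      obtain ⟨hef, hec⟩ := he
      obtain ⟨q, hq, rfl⟩ := Finset.mem_image.1 hef
      rw [MuAux.mem_PP] at hq
      obtain ⟨h1, h2, h3, -⟩ := hq
      refine ⟨?_, ?_, ?_⟩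
      · rw [Sym2.mk_isDiag_iff]; omega
      · intro x hx
        rw [Sym2.mem_iff] at hx
        rcases hx with rfl | rfl <;> rw [Set.mem_Icc] <;> omega
      · rw [MuAux.edgeSet_cycle (by omega)]
        exact hec
    · rw [MuAux.sup_Sstar_eq hn, MuAux.rank_gstar hn, MuAux.rank_cycle hn]
  have hub : ∀ N ∈ {N | ∃ S : Finset (Sym2 ℕ), S.card = N ∧
      (∀ e ∈ S, ¬e.IsDiag ∧ (∀ x ∈ e, x ∈ Set.Icc 1 (2 ^ n)) ∧
        e ∉ (cycleG (2 ^ n)).edgeSet) ∧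
      rankNumber (cycleG (2 ^ n) ⊔ SimpleGraph.fromEdgeSet (↑S : Set (Sym2 ℕ)))
        = rankNumber (cycleG (2 ^ n))}, N ≤ (n - 2) * 2 ^ n + 1 := by
    rintro N ⟨S, rfl, hS, hrk⟩
    exact MuAux.upper_bound hn hS hrk
  have hrfl : muOn (cycleG (2 ^ n)) (Set.Icc 1 (2 ^ n)) = sSup {N | ∃ S : Finset (Sym2 ℕ),
      S.card = N ∧
      (∀ e ∈ S, ¬e.IsDiag ∧ (∀ x ∈ e, x ∈ Set.Icc 1 (2 ^ n)) ∧
        e ∉ (cycleG (2 ^ n)).edgeSet) ∧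
      rankNumber (cycleG (2 ^ n) ⊔ SimpleGraph.fromEdgeSet (↑S : Set (Sym2 ℕ)))
        = rankNumber (cycleG (2 ^ n))} := rfl
  rw [hrfl]
  exact le_antisymm (csSup_le ⟨_, hmem⟩ hub) (le_csSup ⟨_, hub⟩ hmem)
end

section
/- Let t ≥ 2 and let m_1, m_2, …, m_t be positive integers with m_1 > m_i for all 2 ≤ i ≤ t. Then every edge joining two distinct vertices of the part V_1 of size m_1 is forbidden for K_{m_1,…,m_t}. -/
open SimpleGraph

/-- An edge `e ∉ E(G)` is forbidden for `G` if adding it increases the rank number. -/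
def forbiddenEdge {V : Type*} (G : SimpleGraph V) (e : Sym2 V) : Prop :=
  rankNumber G < rankNumber (G ⊔ SimpleGraph.fromEdgeSet {e})

/-- Adjacent vertices get distinct labels in a ranking. -/
lemma ranking_adj_ne {V : Type*} {G : SimpleGraph V} {k : ℕ} {f : V → ℕ}
    (hf : IsRanking G k f) {u v : V} (h : G.Adj u v) : f u ≠ f v := by
  intro hfe
  have hne := h.ne
  have hp : (Walk.cons h Walk.nil).IsPath := by
    simp [Walk.isPath_def, hne]
  obtain ⟨w, hw, hlt⟩ := hf.2 u v hne hfe _ hp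
  simp [Walk.support_cons] at hw
  rcases hw with rfl | rfl
  · omega
  · omega

/-- If two vertices with equal labels are joined by a path of length two
through `w`, then `w` has a strictly larger label. -/
lemma ranking_two_path {V : Type*} {G : SimpleGraph V} {k : ℕ} {f : V → ℕ}
    (hf : IsRanking G k f) {u v w : V} (huv : u ≠ v) (hfe : f u = f v)
    (h1 : G.Adj u w) (h2 : G.Adj w v) : f u < f w := by
  have hp : (Walk.cons h1 (Walk.cons h2 Walk.nil)).IsPath := by
    simp [Walk.isPath_def, h1.ne, h2.ne, huv]
  obtain ⟨x, hx, hlt⟩ := hf.2 u v huv hfe _ hp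
  simp [Walk.support_cons] at hx
  rcases hx with rfl | rfl | rfl
  · omega
  · exact hlt
  · omega

/-- in the complete multipartite graph with parts `Vᵢ = Fin (m i)` of
sizes `m i ≥ 1` (at least two parts), if the part indexed `i₁` is strictly largest,
then every edge joining two distinct vertices of that part is forbidden. -/
theorem multipartite_max_part_edge_forbidden (t : ℕ) (ht : 2 ≤ t) (m : Fin t → ℕ)
    (hm : ∀ i, 1 ≤ m i) (i₁ : Fin t) (hmax : ∀ i, i ≠ i₁ → m i < m i₁)
    (a b : Fin (m i₁)) (hab : a ≠ b) :
    forbiddenEdge (SimpleGraph.completeMultipartiteGraph fun i => Fin (m i))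
      s(⟨i₁, a⟩, ⟨i₁, b⟩) := by
  classical
  set V := (i : Fin t) × Fin (m i) with hV
  set G : SimpleGraph V := SimpleGraph.completeMultipartiteGraph fun i => Fin (m i) with hG
  set A : V := ⟨i₁, a⟩ with hA
  set B : V := ⟨i₁, b⟩ with hB
  set G' : SimpleGraph V := G ⊔ SimpleGraph.fromEdgeSet {s(A, B)} with hG'
  have hGadj : ∀ u v : V, G.Adj u v ↔ u.1 ≠ v.1 := by
    intro u v; rw [hG]; simp
  have hABne : A ≠ B := by
    intro h
    rw [hA, hB] at h
    injection h with h1 h2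
    exact hab h2
  have hAB : G'.Adj A B := by
    rw [hG']
    exact Or.inr ⟨Set.mem_singleton _, hABne⟩
  -- part sizes: 2 ≤ m i₁
  have hM2 : 2 ≤ m i₁ := by
    have : Nontrivial (Fin t) := by
      refine ⟨⟨0, by omega⟩, ⟨1, by omega⟩, ?_⟩
      simp [Fin.ext_iff]
    obtain ⟨i, hi⟩ := exists_ne i₁
    have := hmax i hi
    have := hm i
    omega
  -- parts as finsets
  set P : Fin t → Finset V := fun j => Finset.univ.filter (fun v => v.1 = j) with hP
  set Qf : Fin t → Finset V := fun j => Finset.univ.filter (fun v => ¬ v.1 = j) with hQ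
  have hPcard : ∀ j, (P j).card = m j := by
    intro j
    have hPs : P j = Finset.sigma {j} (fun i => Finset.univ) := by
      ext ⟨i, x⟩
      constructor
      · intro hmem
        have hij : i = j := by simpa [hP] using hmem
        subst hij
        exact Finset.mem_sigma.mpr ⟨Finset.mem_singleton_self _, Finset.mem_univ _⟩
      · intro hmem
        have hji : i = j := Finset.mem_singleton.mp (Finset.mem_sigma.mp hmem).1
        subst hji
        simp [hP]
    rw [hPs, Finset.card_sigma]
    simp
  have hPQ : ∀ j, (P j).card + (Qf j).card = Fintype.card V :=
    fun j => Finset.card_filter_add_card_filter_not _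
  set q : ℕ := (Qf i₁).card with hq
  -- Upper bound : a (q+1)-ranking of G
  have hcardsub : Fintype.card {v : V // ¬ v.1 = i₁} = q := Fintype.card_subtype _
  let e := Fintype.equivFinOfCardEq hcardsub
  set f₀ : V → ℕ := fun v => if h : v.1 = i₁ then 1 else (e ⟨v, h⟩).val + 2 with hf₀
  have hU : IsRanking G (q + 1) f₀ := by
    constructor
    · intro v
      by_cases h : v.1 = i₁
      · simp [hf₀, h]
      · have := (e ⟨v, h⟩).isLt
        simp only [hf₀, dif_neg h]
        omega
    · intro u v huv hfe p _hp
      have hu1 : u.1 = i₁ := by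
        by_contra hu
        by_cases hv : v.1 = i₁
        · simp [hf₀, hu, hv] at hfe
        · simp only [hf₀, dif_neg hu, dif_neg hv] at hfe
          have hee : (⟨u, hu⟩ : {v : V // ¬ v.1 = i₁}) = ⟨v, hv⟩ :=
            e.injective (Fin.ext (by omega))
          exact huv (congrArg Subtype.val hee)
      cases p with
      | nil => exact absurd rfl huv
      | @cons _ c _ hadj p' =>
        have hc : ¬ c.1 = i₁ := by
          have : u.1 ≠ c.1 := (hGadj u c).mp hadj
          rw [hu1] at this
          exact fun h => this h.symm
        refine ⟨c, ?_, ?_⟩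
        · simp only [Walk.support_cons, List.mem_cons]
          exact Or.inr p'.start_mem_support
        · simp only [hf₀, dif_pos hu1, dif_neg hc]
          omega
  -- Lower bound : any ranking of G' needs at least q+2 labels
  have hL : ∀ k g, IsRanking G' k g → q + 2 ≤ k := by
    intro k g hg
    have hadjne : ∀ u v : V, G'.Adj u v → g u ≠ g v := fun u v h => ranking_adj_ne hg h
    have hGadj' : ∀ u v : V, u.1 ≠ v.1 → G'.Adj u v := by
      intro u v h
      exact (le_sup_left : G ≤ G') ((hGadj u v).mpr h)
    have hsame : ∀ u v : V, g u = g v → u ≠ v → u.1 = v.1 := by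
      intro u v hfe hne
      by_contra hd
      exact hadjne u v (hGadj' u v hd) hfe
    have h2 : ∀ u v w : V, u ≠ v → g u = g v → w.1 ≠ u.1 → g u < g w := by
      intro u v w hne hfe hw
      have hv1 : v.1 = u.1 := (hsame u v hfe hne).symm
      exact ranking_two_path hg hne hfe (hGadj' u w (Ne.symm hw))
        (hGadj' w v (by rw [hv1]; exact hw))
    have himg : (Finset.image g Finset.univ).card ≤ k := by
      have hsub : Finset.image g Finset.univ ⊆ Finset.Icc 1 k := by
        intro x hx
        simp only [Finset.mem_image, Finset.mem_univ, true_and] at hx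
        obtain ⟨v, rfl⟩ := hx
        exact Finset.mem_Icc.mpr (hg.1 v)
      calc (Finset.image g Finset.univ).card ≤ (Finset.Icc 1 k).card :=
            Finset.card_le_card hsub
        _ = k := by rw [Nat.card_Icc]; omega
    by_cases hinj : Function.Injective g
    · have hcard : (Finset.image g Finset.univ).card = Fintype.card V := by
        rw [Finset.card_image_of_injective _ hinj, Finset.card_univ]
      have hn := hPQ i₁
      rw [hPcard i₁] at hn
      omega
    · obtain ⟨u, v, hfe, hne⟩ := Function.not_injective_iff.mp hinj
      set j := u.1 with hj
      have hinjQ : Set.InjOn g (Qf j : Set V) := by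
        intro x hx y hy hgxy
        by_contra hxy
        have hxj : ¬ x.1 = j := by simpa [hQ] using hx
        have hyj : ¬ y.1 = j := by simpa [hQ] using hy
        have ha1 := h2 u v x hne hfe hxj
        have ha2 := h2 x y u hxy hgxy (fun hh => hxj hh.symm)
        omega
      have hdisj : Disjoint (Finset.image g (P j)) (Finset.image g (Qf j)) := by
        rw [Finset.disjoint_left]
        rintro c hc hc'
        simp only [Finset.mem_image, hP, hQ, Finset.mem_filter, Finset.mem_univ,
          true_and] at hc hc'
        obtain ⟨x, hxj, hxc⟩ := hc
        obtain ⟨y, hyj, hyc⟩ := hc'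
        have hadj : G'.Adj x y := hGadj' x y (by rw [hxj]; exact fun h => hyj h.symm)
        exact hadjne x y hadj (by rw [hxc, hyc])
      have hunion : Finset.image g Finset.univ = Finset.image g (P j) ∪ Finset.image g (Qf j) := by
        rw [← Finset.image_union, hP, hQ]
        rw [Finset.filter_union_filter_not_eq]
      have hcardsum : (Finset.image g Finset.univ).card
          = (Finset.image g (P j)).card + (Finset.image g (Qf j)).card := by
        rw [hunion, Finset.card_union_of_disjoint hdisj]
      have hQcard : (Finset.image g (Qf j)).card = (Qf j).card :=
        Finset.card_image_of_injOn hinjQ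
      by_cases hji : j = i₁
      · have hAP : A ∈ P j := by
          simp [hP, hA, hji]
        have hBP : B ∈ P j := by
          simp [hP, hB, hji]
        have hgAB : g A ≠ g B := hadjne A B hAB
        have h2card : 2 ≤ (Finset.image g (P j)).card := by
          rw [Nat.succ_le_iff]
          exact Finset.one_lt_card.mpr
            ⟨g A, Finset.mem_image_of_mem g hAP, g B, Finset.mem_image_of_mem g hBP, hgAB⟩
        have hQQ : (Qf j).card = q := by rw [hji]
        omega
      · have hmj : m j < m i₁ := hmax j hji
        have hn := hPQ j
        have hn1 := hPQ i₁
        rw [hPcard j] at hn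
        rw [hPcard i₁] at hn1
        have himgP : 1 ≤ (Finset.image g (P j)).card := by
          rw [Nat.succ_le_iff]
          refine Finset.card_pos.mpr ⟨g u, Finset.mem_image_of_mem g ?_⟩
          simp [hP, hj]
        omega
  -- G' has some ranking
  have hNE : (Fintype.card V) ∈ {k | ∃ g : V → ℕ, IsRanking G' k g} := by
    refine ⟨fun v => (Fintype.equivFin V v).val + 1, ?_, ?_⟩
    · intro v
      have := (Fintype.equivFin V v).isLt
      dsimp only
      omega
    · intro u v hne hfe p hp
      dsimp only at hfe
      exact absurd ((Fintype.equivFin V).injective (Fin.ext (by omega))) hne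
  have hle : rankNumber G ≤ q + 1 := Nat.sInf_le ⟨f₀, hU⟩
  have hge : q + 2 ≤ rankNumber G' := by
    obtain ⟨g, hg⟩ := Nat.sInf_mem (Set.nonempty_of_mem hNE)
    exact hL _ g hg
  show rankNumber G < rankNumber G'
  omega
end

section
/- Let t ≥ 2 and let m_1, m_2, …, m_t be positive integers with m_1 = max{m_1,…,m_t}. Then for every i with 2 ≤ i ≤ t, every edge joining two distinct vertices of the part V_i is good for K_{m_1,…,m_t}. -/
open SimpleGraph

section Aux

variable {V : Type*} {G G' : SimpleGraph V} {k : ℕ} {f : V → ℕ}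

lemma IsRanking.mono_s15 (h : G ≤ G') (hf : IsRanking G' k f) : IsRanking G k f := by
  refine ⟨hf.1, fun u v huv he p hp => ?_⟩
  obtain ⟨w, hw, hlt⟩ := hf.2 u v huv he (p.mapLe h) (hp.mapLe h)
  refine ⟨w, ?_, hlt⟩
  simpa [SimpleGraph.Walk.mapLe, SimpleGraph.Walk.support_map] using hw

lemma IsRanking.adj_ne (hf : IsRanking G k f) {u v : V} (h : G.Adj u v) : f u ≠ f v := by
  intro he
  obtain ⟨w, hw, hlt⟩ := hf.2 u v h.ne he (Walk.cons h Walk.nil)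
    (by simp [Walk.cons_isPath_iff, h.ne])
  simp only [Walk.support_cons, Walk.support_nil, List.mem_cons, List.mem_singleton] at hw
  rcases hw with rfl | rfl | h'
  · omega
  · omega
  · simp at h'

lemma IsRanking.path2 (hf : IsRanking G k f) {u v w : V} (huv : u ≠ v) (he : f u = f v)
    (h1 : G.Adj u w) (h2 : G.Adj w v) : f u < f w := by
  obtain ⟨x, hx, hlt⟩ := hf.2 u v huv he (Walk.cons h1 (Walk.cons h2 Walk.nil))
    (by simp [Walk.cons_isPath_iff, h1.ne, h2.ne, huv])
  simp only [Walk.support_cons, Walk.support_nil, List.mem_cons, List.mem_singleton] at hx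
  rcases hx with rfl | rfl | rfl | h'
  · omega
  · exact hlt
  · omega
  · simp at h'

end Aux

lemma card_part {t : ℕ} (m : Fin t → ℕ) (j : Fin t) :
    Fintype.card {v : Σ j', Fin (m j') // v.1 = j} = m j := by
  have e : {v : Σ j', Fin (m j') // v.1 = j} ≃ Fin (m j) :=
    { toFun := fun v => Fin.cast (congrArg m v.2) v.1.2
      invFun := fun x => ⟨⟨j, x⟩, rfl⟩
      left_inv := by rintro ⟨⟨j', x⟩, rfl⟩; rfl
      right_inv := fun x => rfl }
  simp [Fintype.card_congr e]

set_option maxHeartbeats 1000000 in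
/-- in the complete multipartite graph with parts `Vᵢ = Fin (m i)` of
sizes `m i ≥ 1` (at least two parts), if the part indexed `i₁` has maximum size, then
for every other part, every edge joining two distinct vertices of that part is good. -/
theorem multipartite_other_part_edge_good (t : ℕ) (ht : 2 ≤ t) (m : Fin t → ℕ)
    (hm : ∀ i, 1 ≤ m i) (i₁ : Fin t) (hmax : ∀ i, m i ≤ m i₁)
    (i : Fin t) (hi : i ≠ i₁) (a b : Fin (m i)) (hab : a ≠ b) :
    goodEdge (SimpleGraph.completeMultipartiteGraph fun j => Fin (m j))
      s(⟨i, a⟩, ⟨i, b⟩) := by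
  classical
  set G : SimpleGraph (Σ j, Fin (m j)) :=
    SimpleGraph.completeMultipartiteGraph fun j => Fin (m j) with hG
  set G' : SimpleGraph (Σ j, Fin (m j)) :=
    G ⊔ SimpleGraph.fromEdgeSet {s((⟨i, a⟩ : Σ j, Fin (m j)), ⟨i, b⟩)} with hG'
  have hGadj : ∀ u v : Σ j, Fin (m j), u.1 ≠ v.1 → G.Adj u v := by
    intro u v h; simpa [hG] using h
  set n := Fintype.card (Σ j, Fin (m j)) with hn
  set L := n - m i₁ + 1 with hL
  -- counting parts
  have hcards : ∀ j : Fin t,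
      (Finset.univ.filter fun v : Σ j', Fin (m j') => v.1 = j).card = m j := by
    intro j; rw [← Fintype.card_subtype]; exact card_part m j
  have hcardne : ∀ j : Fin t,
      (Finset.univ.filter fun v : Σ j', Fin (m j') => ¬ v.1 = j).card = n - m j := by
    intro j
    have h1 := Finset.card_filter_add_card_filter_not
      (s := (Finset.univ : Finset (Σ j', Fin (m j')))) (p := fun v => v.1 = j)
    have h2 := hcards j
    have h3 : (Finset.univ : Finset (Σ j', Fin (m j'))).card = n := by
      simp [hn]
    omega
  -- the explicit ranking
  set O := {v : Σ j, Fin (m j) // ¬ v.1 = i₁} with hO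
  have hcardO : Fintype.card O = n - m i₁ := by
    show Fintype.card {v : Σ j, Fin (m j) // ¬ v.1 = i₁} = n - m i₁
    rw [Fintype.card_subtype]
    exact hcardne i₁
  set g : O ≃ Fin (Fintype.card O) := Fintype.equivFin O with hg
  set f : (Σ j, Fin (m j)) → ℕ :=
    fun v => if h : v.1 = i₁ then 1 else 2 + (g ⟨v, h⟩ : ℕ) with hf_def
  have hbound : ∀ v, 1 ≤ f v ∧ f v ≤ L := by
    intro v
    by_cases h : v.1 = i₁
    · simp only [hf_def, dif_pos h]
      omega
    · simp only [hf_def, dif_neg h]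
      have h2 := (g ⟨v, h⟩).2
      omega
  have hf' : IsRanking G' L f := by
    refine ⟨hbound, fun u v huv he p hp => ?_⟩
    by_cases hu : u.1 = i₁ <;> by_cases hv : v.1 = i₁
    · -- both in the big part: second vertex of the path is outside the part
      cases p with
      | nil => exact absurd rfl huv
      | cons h q =>
        rename_i w
        have hw : ¬ w.1 = i₁ := by
          rcases (SimpleGraph.sup_adj _ _ _ _).1 h with h' | h'
          · intro hwi
            have : u.1 ≠ w.1 := by simpa [hG] using h'
            exact this (hu.trans hwi.symm)
          · exfalso
            rw [SimpleGraph.fromEdgeSet_adj] at h'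
            have h3 : s(u, w) = s((⟨i, a⟩ : Σ j, Fin (m j)), ⟨i, b⟩) := by
              simpa using h'.1
            rw [Sym2.eq_iff] at h3
            rcases h3 with ⟨h4, _⟩ | ⟨h4, _⟩ <;>
              · rw [h4] at hu; exact hi hu
        refine ⟨w, ?_, ?_⟩
        · rw [Walk.support_cons]
          exact List.mem_cons_of_mem _ q.start_mem_support
        · have h5 : f u = 1 := by simp only [hf_def, dif_pos hu]
          have h6 : f w = 2 + (g ⟨w, hw⟩ : ℕ) := by simp only [hf_def, dif_neg hw]
          omega
    · exfalso
      simp only [hf_def, dif_pos hu, dif_neg hv] at he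
      omega
    · exfalso
      simp only [hf_def, dif_neg hu, dif_pos hv] at he
      omega
    · exfalso
      simp only [hf_def, dif_neg hu, dif_neg hv] at he
      have hvals : (g ⟨u, hu⟩ : ℕ) = (g ⟨v, hv⟩ : ℕ) := by omega
      have : (⟨u, hu⟩ : O) = ⟨v, hv⟩ := g.injective (Fin.ext hvals)
      exact huv (congrArg Subtype.val this)
  have hfG : IsRanking G L f := hf'.mono_s15 le_sup_left
  -- lower bound: every ranking of G uses at least L labels
  have lower : ∀ k f', IsRanking G k f' → L ≤ k := by
    intro k f' hr
    have hVpos : 1 ≤ n := by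
      rw [hn]
      exact Fintype.card_pos_iff.2 ⟨⟨i, a⟩⟩
    have hIcc : ∀ (A : Finset (Σ j, Fin (m j))), Set.InjOn f' A → A.card ≤ k := by
      intro A hinj
      have := Finset.card_le_card_of_injOn f'
        (fun v _ => Finset.mem_Icc.2 ⟨(hr.1 v).1, (hr.1 v).2⟩) hinj
      simpa using this
    by_cases hrep : ∃ (j : Fin t) (x y : Fin (m j)), x ≠ y ∧ f' ⟨j, x⟩ = f' ⟨j, y⟩
    · obtain ⟨j, x, y, hxy, hexy⟩ := hrep
      have hjxy : (⟨j, x⟩ : Σ j', Fin (m j')) ≠ ⟨j, y⟩ := by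
        simp [hxy]
      set A : Finset (Σ j', Fin (m j')) :=
        insert ⟨j, x⟩ (Finset.univ.filter fun v => ¬ v.1 = j) with hA
      have hinj : Set.InjOn f' A := by
        intro u hu v hv he
        by_contra hne
        simp only [hA, Finset.coe_insert, Set.mem_insert_iff, Finset.coe_filter,
          Set.mem_setOf_eq, Finset.mem_univ, true_and] at hu hv
        by_cases h1 : u.1 = v.1
        · by_cases h2 : u.1 = j
          · rcases hu with rfl | hu'
            · rcases hv with rfl | hv'
              · exact hne rfl
              · exact hv' (h1.symm.trans h2)
            · exact hu' h2
          · -- two distinct vertices with the same label in a part different from j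
            have hadj1 : G.Adj u ⟨j, x⟩ := hGadj _ _ h2
            have hadj2 : G.Adj (⟨j, x⟩ : Σ j', Fin (m j')) v :=
              hGadj _ _ (fun hh => h2 (h1.trans hh.symm))
            have h3 : f' u < f' ⟨j, x⟩ := hr.path2 hne he hadj1 hadj2
            have hadj3 : G.Adj (⟨j, x⟩ : Σ j', Fin (m j')) u := hadj1.symm
            have hadj4 : G.Adj u ⟨j, y⟩ := hGadj _ _ h2
            have h4 : f' ⟨j, x⟩ < f' u := hr.path2 hjxy hexy hadj3 hadj4
            omega
        · exact hr.adj_ne (hGadj _ _ h1) he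
      have hAcard : A.card = (n - m j) + 1 := by
        rw [hA, Finset.card_insert_of_notMem (by simp), hcardne j]
      have hk := hIcc A hinj
      have hmj := hmax j
      have hmj1 := hm j
      have hcard_le : m j ≤ n := by
        have := hcards j
        have := Finset.card_filter_le (Finset.univ : Finset (Σ j', Fin (m j')))
          (fun v => v.1 = j)
        simp only [hcards j, Finset.card_univ, ← hn] at this
        exact this
      omega
    · push_neg at hrep
      have hinj : Set.InjOn f' (Finset.univ : Finset (Σ j, Fin (m j))) := by
        intro u _ v _ he
        by_contra hne
        by_cases h1 : u.1 = v.1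
        · obtain ⟨ju, xu⟩ := u
          obtain ⟨jv, xv⟩ := v
          simp only at h1
          subst h1
          have hxu : xu ≠ xv := fun h => hne (by rw [h])
          exact hrep ju xu xv hxu he
        · exact hr.adj_ne (hGadj _ _ h1) he
      have hk := hIcc Finset.univ hinj
      simp only [Finset.card_univ, ← hn] at hk
      have := hm i₁
      omega
  -- conclude
  have memG' : L ∈ {k | ∃ f0 : (Σ j, Fin (m j)) → ℕ, IsRanking G' k f0} := ⟨f, hf'⟩
  have memG : L ∈ {k | ∃ f0 : (Σ j, Fin (m j)) → ℕ, IsRanking G k f0} := ⟨f, hfG⟩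
  have e1 : rankNumber G' = L := by
    refine le_antisymm (Nat.sInf_le memG') (le_csInf ⟨L, memG'⟩ ?_)
    rintro k ⟨f0, hf0⟩
    exact lower k f0 (hf0.mono_s15 le_sup_left)
  have e2 : rankNumber G = L := by
    refine le_antisymm (Nat.sInf_le memG) (le_csInf ⟨L, memG⟩ ?_)
    rintro k ⟨f0, hf0⟩
    exact lower k f0 hf0
  show rankNumber G' = rankNumber G
  rw [e1, e2]
end

section
/- Let t ≥ 2 and let m_1, m_2, …, m_t be positive integers with m_1 = max{m_1,…,m_t}. Then μ(K_{m_1,…,m_t}) = Σ_{i=2}^{t} m_i(m_i−1)/2. -/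
open SimpleGraph

/-- `μ(G)`: the maximum cardinality of a set `S` of edges on `V(G)` (non-loops,
disjoint from `E(G)`) such that `χᵣ(G ∪ S) = χᵣ(G)`. -/
noncomputable def mu {V : Type*} (G : SimpleGraph V) : ℕ :=
  sSup {N | ∃ S : Finset (Sym2 V), S.card = N ∧
    (∀ e ∈ S, ¬e.IsDiag ∧ e ∉ G.edgeSet) ∧
    rankNumber (G ⊔ SimpleGraph.fromEdgeSet (S : Set (Sym2 V))) = rankNumber G}


open Finset

lemma ranking_card {W : Type*} [Fintype W] (G : SimpleGraph W) :
    ∃ f, IsRanking G (Fintype.card W) f := by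
  let e := Fintype.equivFin W
  refine ⟨fun v => (e v).1 + 1, fun v => ⟨le_add_self, ?_⟩, ?_⟩
  · show (e v).1 + 1 ≤ Fintype.card W
    have := (e v).2; omega
  · intro u v huv heq
    replace heq : (e u).1 + 1 = (e v).1 + 1 := heq
    exact absurd (e.injective (Fin.val_injective (by omega))) huv

section Part
variable {t : ℕ} (m : Fin t → ℕ)

local notation "V" => (i : Fin t) × Fin (m i)
local notation "K" => completeMultipartiteGraph fun i => Fin (m i)

lemma rank_same {G' : SimpleGraph V} (hG : K ≤ G') {k : ℕ} {f : V → ℕ}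
    (hf : IsRanking G' k f) {u v : V} (huv : u ≠ v) (heq : f u = f v) :
    u.1 = v.1 ∧ ¬ G'.Adj u v ∧ ∀ w : V, w.1 ≠ u.1 → f u < f w := by
  have hnadj : ¬ G'.Adj u v := by
    intro h
    obtain ⟨w, hw, hlt⟩ := hf.2 u v huv heq (Walk.cons h Walk.nil) (by simp [huv])
    simp only [Walk.support_cons, Walk.support_nil, List.mem_cons, List.mem_singleton,
      List.not_mem_nil, or_false] at hw
    rcases hw with rfl | rfl
    · exact lt_irrefl _ hlt
    · rw [heq] at hlt; exact lt_irrefl _ hlt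
  have hpart : u.1 = v.1 := by
    by_contra h
    exact hnadj (hG h)
  refine ⟨hpart, hnadj, fun w hw => ?_⟩
  have hwu : w ≠ u := fun h => hw (by rw [h])
  have hwv : w ≠ v := fun h => hw (by rw [h, ← hpart])
  have a1 : G'.Adj u w := hG (Ne.symm hw)
  have a2 : G'.Adj w v := hG (show w.1 ≠ v.1 from fun h => hw (h.trans hpart.symm))
  obtain ⟨x, hx, hlt⟩ := hf.2 u v huv heq (Walk.cons a1 (Walk.cons a2 Walk.nil))
    (by simp [Walk.cons_isPath_iff, huv, hwu.symm, hwv])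
  simp only [Walk.support_cons, Walk.support_nil, List.mem_cons, List.mem_singleton,
    List.not_mem_nil, or_false] at hx
  rcases hx with rfl | rfl | rfl
  · exact absurd hlt (lt_irrefl _)
  · exact hlt
  · rw [heq] at hlt; exact absurd hlt (lt_irrefl _)



lemma card_part_s16 (P : Fin t) :
    (univ.filter fun v : V => v.1 = P).card = m P := by
  rw [eq_comm, ← Fintype.card_fin (m P), ← card_univ]
  refine card_bij (fun b _ => (⟨P, b⟩ : V)) (fun b _ => by simp) (fun a _ b _ h => by
    simpa using h) ?_
  rintro ⟨i, a⟩ hb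
  simp only [mem_filter] at hb
  obtain ⟨-, rfl⟩ := hb
  exact ⟨a, mem_univ a, rfl⟩

/-- the graph of all within-part edges avoiding part `j` -/
def Hgr (j : Fin t) : SimpleGraph V where
  Adj u v := u.1 = v.1 ∧ u.1 ≠ j ∧ u ≠ v
  symm := by
    constructor
    rintro u v ⟨h1, h2, h3⟩
    exact ⟨h1.symm, fun h => h2 (h1.trans h), h3.symm⟩
  loopless := ⟨fun v => by simp⟩

instance (j : Fin t) : DecidableRel (Hgr m j).Adj :=
  fun u v => inferInstanceAs (Decidable (u.1 = v.1 ∧ u.1 ≠ j ∧ u ≠ v))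

lemma degree_Hgr (j : Fin t) (v : V) :
    (Hgr m j).degree v = if v.1 = j then 0 else m v.1 - 1 := by
  obtain ⟨i, a⟩ := v
  by_cases hij : i = j
  · subst hij
    rw [if_pos rfl, ← card_neighborFinset_eq_degree, card_eq_zero,
      eq_empty_iff_forall_notMem]
    intro u hu
    rw [mem_neighborFinset] at hu
    exact hu.2.1 rfl
  · simp only [if_neg hij]
    rw [← card_neighborFinset_eq_degree, eq_comm, ← Fintype.card_fin (m i),
      ← card_univ, ← card_erase_of_mem (mem_univ a)]
    refine card_bij (fun b _ => (⟨i, b⟩ : V)) ?_ (fun x hx y hy h => by simpa using h) ?_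
    · intro b hb
      rw [mem_erase] at hb
      rw [mem_neighborFinset]
      refine ⟨rfl, hij, fun h => hb.1 ?_⟩
      rw [Sigma.mk.inj_iff] at h
      exact (eq_of_heq h.2).symm
    · rintro ⟨i', b⟩ hb
      rw [mem_neighborFinset] at hb
      obtain ⟨h1, -, h3⟩ := hb
      dsimp at h1; subst h1
      refine ⟨b, ?_, rfl⟩
      rw [mem_erase]
      exact ⟨by rintro rfl; exact h3 rfl, mem_univ b⟩

lemma two_dvd_pred_mul (a : ℕ) : 2 * (a * (a - 1) / 2) = a * (a - 1) := by
  have h : Even (a * (a - 1)) := by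
    rcases Nat.even_or_odd a with h | h
    · exact h.mul_right _
    · exact (Nat.Odd.sub_odd h odd_one).mul_left _
  exact Nat.mul_div_cancel' h.two_dvd

lemma card_edge_Hgr (j : Fin t) :
    (Hgr m j).edgeFinset.card = ∑ i ∈ univ.erase j, m i * (m i - 1) / 2 := by
  have hs := SimpleGraph.sum_degrees_eq_twice_card_edges (Hgr m j)
  have h1 : ∑ v : V, (Hgr m j).degree v
      = ∑ i ∈ univ.erase j, m i * (m i - 1) := by
    rw [← Finset.univ_sigma_univ, Finset.sum_sigma]
    simp only [degree_Hgr]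
    have : ∀ i : Fin t, ∑ _a : Fin (m i), (if i = j then 0 else m i - 1)
        = if i = j then 0 else m i * (m i - 1) := by
      intro i
      rw [Finset.sum_const, card_univ, Fintype.card_fin, smul_eq_mul]
      split <;> simp
    rw [Finset.sum_congr rfl fun i _ => this i]
    have h2 : (∑ i : Fin t, if i = j then 0 else m i * (m i - 1))
        = ∑ i ∈ univ.filter (· ≠ j), m i * (m i - 1) := by
      rw [Finset.sum_filter]
      exact Finset.sum_congr rfl fun i _ => by by_cases h : i = j <;> simp [h]
    rw [h2, Finset.filter_ne']
  have h2 : 2 * ∑ i ∈ univ.erase j, m i * (m i - 1) / 2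
      = ∑ i ∈ univ.erase j, m i * (m i - 1) := by
    rw [Finset.mul_sum]
    exact Finset.sum_congr rfl fun i _ => two_dvd_pred_mul (m i)
  omega


lemma sum_lt (ht : 2 ≤ t) (hm : ∀ i, 1 ≤ m i) (i₁ : Fin t) : m i₁ + 1 ≤ ∑ i, m i := by
  obtain ⟨j, hj⟩ := Fintype.exists_ne_of_one_lt_card (by simp; omega) i₁
  have h1 := Finset.add_sum_erase univ m (mem_univ i₁)
  have h2 : m j ≤ ∑ x ∈ univ.erase i₁, m x :=
    Finset.single_le_sum (fun i _ => Nat.zero_le _) (mem_erase.2 ⟨hj, mem_univ j⟩)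
  have := hm j
  omega

lemma key (ht : 2 ≤ t) (hm : ∀ i, 1 ≤ m i) (i₁ : Fin t) (hmax : ∀ i, m i ≤ m i₁)
    {G' : SimpleGraph V} (hG : K ≤ G') {k : ℕ} {f : V → ℕ}
    (hf : IsRanking G' k f) :
    (∑ i, m i) - m i₁ + 1 ≤ k ∧
    (k ≤ (∑ i, m i) - m i₁ + 1 → 2 ≤ m i₁ →
      ∃ P : Fin t, m P = m i₁ ∧ ∀ u v : V, u.1 = P → v.1 = P → ¬ G'.Adj u v) := by
  have hcardV : Fintype.card ((i : Fin t) × Fin (m i)) = ∑ i, m i := by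
    simp
  have hn1 := sum_lt m ht hm i₁
  have hm1 := hm i₁
  have hsub : univ.image f ⊆ Icc 1 k := by
    intro c hc; rw [mem_image] at hc; obtain ⟨v, -, rfl⟩ := hc
    exact mem_Icc.2 (hf.1 v)
  have hk : (univ.image f).card ≤ k := by
    have := card_le_card hsub
    rwa [Nat.card_Icc, Nat.add_sub_cancel] at this
  by_cases hinj : Function.Injective f
  · have : (univ.image f).card = ∑ i, m i := by
      rw [Finset.card_image_of_injective _ hinj, card_univ, hcardV]
    exact ⟨by omega, fun h1 h2 => by omega⟩
  · rw [Function.not_injective_iff] at hinj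
    obtain ⟨u₀, v₀, heq₀, hne₀⟩ := hinj
    set P := u₀.1 with hP
    have hrep : ∀ u v : V, u ≠ v → f u = f v → u.1 = P := by
      intro u v huv heq
      by_contra hne
      have h1 := (rank_same m hG hf huv heq).2.2 u₀ (fun h => hne h.symm)
      have h2 := (rank_same m hG hf hne₀ heq₀).2.2 u hne
      omega
    set A := univ.filter (fun v : V => v.1 = P) with hA
    set B := univ.filter (fun v : V => ¬ v.1 = P) with hB
    have hdisj : Disjoint (A.image f) (B.image f) := by
      rw [Finset.disjoint_left]
      intro c hcA hcB
      rw [mem_image] at hcA hcB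
      obtain ⟨u, hu, rfl⟩ := hcA
      obtain ⟨v, hv, hfv⟩ := hcB
      rw [hA, mem_filter] at hu
      rw [hB, mem_filter] at hv
      have huv : v ≠ u := fun h => hv.2 (h ▸ hu.2)
      exact hv.2 (hrep v u huv hfv)
    have hBinj : Set.InjOn f B := by
      intro u hu v hv heq
      by_contra hne
      rw [Finset.mem_coe, hB, mem_filter] at hu
      exact hu.2 (hrep u v hne heq)
    have hcardA : A.card = m P := card_part_s16 m P
    have hcardB : A.card + B.card = ∑ i, m i := by
      rw [hA, hB, Finset.card_filter_add_card_filter_not, card_univ, hcardV]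
    have himB : (B.image f).card = B.card := Finset.card_image_of_injOn hBinj
    have hunion : (A.image f) ∪ (B.image f) = univ.image f := by
      rw [← Finset.image_union, hA, hB, Finset.filter_union_filter_not_eq]
    have hcount : (A.image f).card + (B.image f).card ≤ k := by
      rw [← Finset.card_union_of_disjoint hdisj, hunion]; exact hk
    have hAne : 1 ≤ (A.image f).card := by
      refine card_pos.2 ⟨f u₀, mem_image_of_mem f ?_⟩
      rw [hA, mem_filter]; exact ⟨mem_univ _, rfl⟩
    have hPm : m P ≤ m i₁ := hmax P
    constructor
    · omega
    · intro hk2 h2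
      refine ⟨P, by omega, ?_⟩
      have hAone : (A.image f).card ≤ 1 := by omega
      intro u v hu hv hadj
      have huv := G'.ne_of_adj hadj
      have hfu : f u = f v := by
        have h1' : f u ∈ A.image f :=
          mem_image_of_mem f (by rw [hA, mem_filter]; exact ⟨mem_univ _, hu⟩)
        have h2' : f v ∈ A.image f :=
          mem_image_of_mem f (by rw [hA, mem_filter]; exact ⟨mem_univ _, hv⟩)
        exact Finset.card_le_one.1 hAone _ h1' _ h2'
      exact (rank_same m hG hf huv hfu).2.1 hadj

lemma rank_ub (ht : 2 ≤ t) (hm : ∀ i, 1 ≤ m i) (i₁ : Fin t)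
    {G' : SimpleGraph V}
    (hind : ∀ u v : V, u.1 = i₁ → v.1 = i₁ → ¬ G'.Adj u v) :
    ∃ f, IsRanking G' ((∑ i, m i) - m i₁ + 1) f := by
  have hn1 := sum_lt m ht hm i₁
  have hcardV : Fintype.card ((i : Fin t) × Fin (m i)) = ∑ i, m i := by simp
  have hcardB : Fintype.card {v : V // ¬ v.1 = i₁} = (∑ i, m i) - m i₁ := by
    have h1 : Fintype.card {v : V // v.1 = i₁} = m i₁ := by
      rw [Fintype.card_subtype]; exact card_part_s16 m i₁
    rw [Fintype.card_subtype_compl, h1, hcardV]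
  let e := Fintype.equivFinOfCardEq hcardB
  refine ⟨fun v => if h : v.1 = i₁ then 1 else (e ⟨v, h⟩).1 + 2, ?_, ?_⟩
  · intro v
    by_cases h : v.1 = i₁
    · simp only [dif_pos h]; omega
    · simp only [dif_neg h]
      have := (e ⟨v, h⟩).2
      constructor <;> omega
  · intro u v huv heq
    by_cases hu : u.1 = i₁ <;> by_cases hv : v.1 = i₁
    · intro p hp
      cases p with
      | nil => exact absurd rfl huv
      | @cons _ x _ h q =>
        refine ⟨x, ?_, ?_⟩
        · rw [Walk.support_cons]; exact List.mem_cons_of_mem _ q.start_mem_support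
        · have hx : ¬ x.1 = i₁ := fun hx => hind u x hu hx h
          simp only [dif_pos hu, dif_neg hx]
          omega
    · simp only [dif_pos hu, dif_neg hv] at heq; omega
    · simp only [dif_neg hu, dif_pos hv] at heq; omega
    · simp only [dif_neg hu, dif_neg hv] at heq
      have he : (⟨u, hu⟩ : {v : V // ¬ v.1 = i₁}) = ⟨v, hv⟩ :=
        e.injective (Fin.val_injective (by omega))
      exact absurd (congrArg Subtype.val he) huv

end Part

section Part2

variable {t : ℕ} (m : Fin t → ℕ)

local notation "V" => (i : Fin t) × Fin (m i)
local notation "K" => completeMultipartiteGraph fun i => Fin (m i)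

lemma rank_eq (ht : 2 ≤ t) (hm : ∀ i, 1 ≤ m i) (i₁ : Fin t) (hmax : ∀ i, m i ≤ m i₁)
    {G' : SimpleGraph V} (hG : K ≤ G')
    (hind : ∀ u v : V, u.1 = i₁ → v.1 = i₁ → ¬ G'.Adj u v) :
    rankNumber G' = (∑ i, m i) - m i₁ + 1 := by
  refine le_antisymm (Nat.sInf_le (rank_ub m ht hm i₁ hind)) (le_csInf ?_ ?_)
  · obtain ⟨f, hf⟩ := ranking_card G'
    exact ⟨_, f, hf⟩
  · rintro k ⟨f, hf⟩
    exact (key m ht hm i₁ hmax hG hf).1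

lemma S_subset {S : Finset (Sym2 V)}
    (hS : ∀ e ∈ S, ¬ e.IsDiag ∧ e ∉ (K).edgeSet)
    (P : Fin t)
    (hind : ∀ u v : V, u.1 = P → v.1 = P →
      ¬ (K ⊔ SimpleGraph.fromEdgeSet (S : Set (Sym2 V))).Adj u v) :
    S ⊆ (Hgr m P).edgeFinset := by
  intro e he
  induction e using Sym2.ind with
  | _ u v =>
    obtain ⟨hd, hK⟩ := hS _ he
    rw [Sym2.isDiag_iff_proj_eq] at hd
    have hne : u ≠ v := hd
    have hpart : u.1 = v.1 := by
      by_contra h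
      exact hK ((SimpleGraph.mem_edgeSet _).2 h)
    have hadj : (K ⊔ SimpleGraph.fromEdgeSet (S : Set (Sym2 V))).Adj u v :=
      (sup_adj _ _ _ _).2 (Or.inr ((fromEdgeSet_adj _).2 ⟨Finset.mem_coe.2 he, hne⟩))
    have hP : u.1 ≠ P := fun h => hind u v h (hpart.symm.trans h) hadj
    rw [mem_edgeFinset, mem_edgeSet]
    exact ⟨hpart, hP, hne⟩

lemma sum_erase_eq (P i₁ : Fin t) (h : m P = m i₁) :
    ∑ i ∈ univ.erase P, m i * (m i - 1) / 2 = ∑ i ∈ univ.erase i₁, m i * (m i - 1) / 2 := by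
  have h1 := Finset.add_sum_erase univ (fun i => m i * (m i - 1) / 2) (mem_univ P)
  have h2 := Finset.add_sum_erase univ (fun i => m i * (m i - 1) / 2) (mem_univ i₁)
  rw [h] at h1
  omega


end Part2

/-- for the complete multipartite graph with parts `Vᵢ = Fin (m i)` of
sizes `m i ≥ 1` (at least two parts), where the part indexed `i₁` has maximum size,
`μ(K_{m_1,…,m_t}) = ∑_{i ≠ i₁} m i (m i - 1) / 2`. -/
theorem mu_multipartite (t : ℕ) (ht : 2 ≤ t) (m : Fin t → ℕ)
    (hm : ∀ i, 1 ≤ m i) (i₁ : Fin t) (hmax : ∀ i, m i ≤ m i₁) :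
    mu (SimpleGraph.completeMultipartiteGraph fun i => Fin (m i)) =
      ∑ i ∈ Finset.univ.erase i₁, m i * (m i - 1) / 2 := by
  classical
  set G := SimpleGraph.completeMultipartiteGraph fun i => Fin (m i) with hGdef
  set N₀ := ∑ i ∈ Finset.univ.erase i₁, m i * (m i - 1) / 2 with hN₀
  have hKrank : rankNumber G = (∑ i, m i) - m i₁ + 1 :=
    rank_eq m ht hm i₁ hmax le_rfl
      (fun u v hu hv hadj => hadj (hu.trans hv.symm))
  -- the upper bound for every member of the mu-set
  have hub : ∀ N ∈ {N | ∃ S : Finset (Sym2 ((i : Fin t) × Fin (m i))), S.card = N ∧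
      (∀ e ∈ S, ¬e.IsDiag ∧ e ∉ G.edgeSet) ∧
      rankNumber (G ⊔ SimpleGraph.fromEdgeSet (S : Set (Sym2 ((i : Fin t) × Fin (m i))))) =
        rankNumber G}, N ≤ N₀ := by
    rintro N ⟨S, rfl, hScond, hSrank⟩
    by_cases h2 : 2 ≤ m i₁
    · have hrank' : rankNumber (G ⊔ SimpleGraph.fromEdgeSet (S : Set _)) =
          (∑ i, m i) - m i₁ + 1 := hSrank.trans hKrank
      have hne' : {k | ∃ f, IsRanking (G ⊔ SimpleGraph.fromEdgeSet (S : Set _)) k f}.Nonempty := by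
        obtain ⟨f, hf⟩ := ranking_card (G ⊔ SimpleGraph.fromEdgeSet (S : Set _))
        exact ⟨_, f, hf⟩
      have hmem : rankNumber (G ⊔ SimpleGraph.fromEdgeSet (S : Set _)) ∈
          {k | ∃ f, IsRanking (G ⊔ SimpleGraph.fromEdgeSet (S : Set _)) k f} :=
        Nat.sInf_mem hne'
      rw [hrank'] at hmem
      obtain ⟨f, hf⟩ := hmem
      obtain ⟨P, hPm, hind⟩ := (key m ht hm i₁ hmax le_sup_left hf).2 le_rfl h2
      calc S.card ≤ (Hgr m P).edgeFinset.card :=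
            Finset.card_le_card (S_subset m hScond P hind)
        _ = ∑ i ∈ Finset.univ.erase P, m i * (m i - 1) / 2 := card_edge_Hgr m P
        _ = N₀ := sum_erase_eq m P i₁ hPm
    · have hS0 : S = ∅ := by
        rw [Finset.eq_empty_iff_forall_notMem]
        intro e he
        induction e using Sym2.ind with
        | _ u v =>
          obtain ⟨hd, hK⟩ := hScond _ he
          rw [Sym2.isDiag_iff_proj_eq] at hd
          have hpart : u.1 = v.1 := by
            by_contra h
            exact hK ((SimpleGraph.mem_edgeSet _).2 h)
          obtain ⟨i, a⟩ := u
          obtain ⟨i', b⟩ := v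
          dsimp at hpart
          subst hpart
          have hmi : m i ≤ 1 := le_trans (hmax i) (by omega)
          have : a = b := by
            have ha := a.2
            have hb := b.2
            exact Fin.ext (by omega)
          exact hd (by rw [this])
      simp [hS0]
  refine le_antisymm (csSup_le ?_ hub) (le_csSup ⟨N₀, hub⟩ ?_)
  · refine ⟨0, ∅, rfl, by simp, ?_⟩
    rw [Finset.coe_empty, SimpleGraph.fromEdgeSet_empty, sup_bot_eq]
  · refine ⟨(Hgr m i₁).edgeFinset, card_edge_Hgr m i₁, ?_, ?_⟩
    · intro e he
      rw [SimpleGraph.mem_edgeFinset] at he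
      induction e using Sym2.ind with
      | _ u v =>
        obtain ⟨hpart, hP, hne⟩ := he
        refine ⟨?_, ?_⟩
        · rw [Sym2.isDiag_iff_proj_eq]; exact hne
        · intro hK
          exact ((SimpleGraph.mem_edgeSet _).1 hK) hpart
    · rw [SimpleGraph.coe_edgeFinset, SimpleGraph.fromEdgeSet_edgeSet, hKrank]
      refine rank_eq m ht hm i₁ hmax le_sup_left ?_
      rintro u v hu hv (h | h)
      · exact h (hu.trans hv.symm)
      · exact h.2.1 hu
end

section
/- For every integer n ≥ 2, the rank number of G_n, the graph obtained from two disjoint copies of the complete graph K_n joined by a single edge, equals n+1. -/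
open SimpleGraph

/-- `G_n`: two disjoint copies of the complete graph `K_n`, with vertex sets
`W = {w_1, …, w_n}` (the left summand, `wᵢ = Sum.inl ⟨i - 1, _⟩`) and
`V = {v_1, …, v_n}` (the right summand, `vᵢ = Sum.inr ⟨i - 1, _⟩`), joined by the
single edge `w_1 v_n`. -/
def twoCliques (n : ℕ) : SimpleGraph (Fin n ⊕ Fin n) :=
  SimpleGraph.fromRel (fun a b =>
    (∃ i j : Fin n, a = Sum.inl i ∧ b = Sum.inl j) ∨
    (∃ i j : Fin n, a = Sum.inr i ∧ b = Sum.inr j) ∨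
    (∃ i j : Fin n, i.val = 0 ∧ j.val = n - 1 ∧ a = Sum.inl i ∧ b = Sum.inr j))

lemma adj_inl {n : ℕ} {i j : Fin n} (h : i ≠ j) :
    (twoCliques n).Adj (Sum.inl i) (Sum.inl j) := by
  rw [twoCliques, fromRel_adj]
  exact ⟨by simpa using h, Or.inl (Or.inl ⟨i, j, rfl, rfl⟩)⟩

lemma adj_inr {n : ℕ} {i j : Fin n} (h : i ≠ j) :
    (twoCliques n).Adj (Sum.inr i) (Sum.inr j) := by
  rw [twoCliques, fromRel_adj]
  exact ⟨by simpa using h, Or.inl (Or.inr (Or.inl ⟨i, j, rfl, rfl⟩))⟩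

lemma adj_cross {n : ℕ} (hn : 1 ≤ n) :
    (twoCliques n).Adj (Sum.inl ⟨0, by omega⟩) (Sum.inr ⟨n - 1, by omega⟩) := by
  rw [twoCliques, fromRel_adj]
  exact ⟨by simp, Or.inl (Or.inr (Or.inr ⟨⟨0, by omega⟩, ⟨n-1, by omega⟩, rfl, rfl, rfl, rfl⟩))⟩

lemma cross_last {n : ℕ} {i m : Fin n} (h : (twoCliques n).Adj (Sum.inl i) (Sum.inr m)) :
    m.val = n - 1 := by
  rw [twoCliques, fromRel_adj] at h
  rcases h with ⟨-, h | h⟩ <;>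
    rcases h with ⟨i', j', hi, hj⟩ | ⟨i', j', hi, hj⟩ | ⟨i', j', h0, hl, hi, hj⟩ <;>
      simp_all

lemma last_mem_support {n : ℕ} (hn : 1 ≤ n) :
    ∀ (a b : Fin n ⊕ Fin n) (p : (twoCliques n).Walk a b)
      (i j : Fin n), a = Sum.inl i → b = Sum.inr j →
      Sum.inr (⟨n - 1, by omega⟩ : Fin n) ∈ p.support := by
  intro a b p
  induction p with
  | nil => intro i j hi hj; subst hi; simp at hj
  | cons h q ih =>
    rename_i x y _
    intro i j hi hj
    subst hi
    rcases y with m | m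
    · rcases ih m j rfl hj with hm
      simp [SimpleGraph.Walk.support_cons, hm]
    · have hm := cross_last h
      have : (⟨n - 1, by omega⟩ : Fin n) = m := by ext; simp [hm]
      rw [this]
      simp [SimpleGraph.Walk.support_cons, SimpleGraph.Walk.start_mem_support]

-- the explicit ranking with n+1 labels
lemma upper (n : ℕ) (hn : 2 ≤ n) :
    ∃ f : Fin n ⊕ Fin n → ℕ, IsRanking (twoCliques n) (n + 1) f := by
  refine ⟨fun x => match x with
    | Sum.inl i => i.val + 1
    | Sum.inr i => if i.val = n - 1 then n + 1 else i.val + 1, ?_, ?_⟩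
  · rintro (i | i)
    · exact ⟨Nat.le_add_left 1 _, by have := i.isLt; show i.val + 1 ≤ n + 1; omega⟩
    · simp only
      split <;> omega
  · rintro (i | i) (j | j) hne heq p hp
    · exfalso; apply hne; simp only at heq
      have : i = j := by ext; omega
      rw [this]
    · -- inl i, inr j : last vertex of right clique is in support with label n+1
      refine ⟨Sum.inr ⟨n - 1, by omega⟩, last_mem_support (by omega) _ _ p i j rfl rfl, ?_⟩
      have hi := i.isLt
      simp only [Fin.val_mk]
      split_ifs <;> omega
    · -- inr i, inl j
      refine ⟨Sum.inr ⟨n - 1, by omega⟩, ?_, ?_⟩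
      · have := last_mem_support (by omega) _ _ p.reverse j i rfl rfl
        rwa [SimpleGraph.Walk.support_reverse, List.mem_reverse] at this
      · have hj := j.isLt
        simp only [Fin.val_mk] at heq ⊢
        split_ifs at heq ⊢ <;> omega
    · exfalso; apply hne; simp only at heq
      have : i = j := by
        ext
        split at heq <;> split at heq <;> omega
      rw [this]

lemma path2 {V : Type*} {G : SimpleGraph V} {u v : V} (h : G.Adj u v) :
    (SimpleGraph.Walk.cons h .nil).IsPath := by
  simp [SimpleGraph.Walk.isPath_def, h.ne]

lemma lower (n k : ℕ) (hn : 2 ≤ n) (f : Fin n ⊕ Fin n → ℕ)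
    (hf : IsRanking (twoCliques n) k f) : n + 1 ≤ k := by
  by_contra hk
  push_neg at hk
  have hk' : k ≤ n := by omega
  obtain ⟨hb, hr⟩ := hf
  -- on each side the labels are injective, hence hit n
  have key : ∀ g : Fin n → ℕ, Function.Injective g → (∀ i, 1 ≤ g i ∧ g i ≤ k) →
      ∃ i, g i = n := by
    intro g hg hgb
    have hsub : Finset.image g Finset.univ ⊆ Finset.Icc 1 n := by
      intro x hx
      simp only [Finset.mem_image, Finset.mem_univ, true_and] at hx
      obtain ⟨i, rfl⟩ := hx
      exact Finset.mem_Icc.2 ⟨(hgb i).1, le_trans (hgb i).2 hk'⟩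
    have hcard : (Finset.image g Finset.univ).card = n := by
      rw [Finset.card_image_of_injective _ hg]; simp
    have heq : Finset.image g Finset.univ = Finset.Icc 1 n :=
      Finset.eq_of_subset_of_card_le hsub (by simp [hcard, Nat.card_Icc])
    have : n ∈ Finset.image g Finset.univ := by
      rw [heq]; exact Finset.mem_Icc.2 ⟨by omega, le_rfl⟩
    simpa using this
  have hinjl : Function.Injective (fun i : Fin n => f (Sum.inl i)) := by
    intro i j hij
    by_contra hne
    obtain ⟨w, hw, hlt⟩ := hr (Sum.inl i) (Sum.inl j) (by simp [hne]) hij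
      (SimpleGraph.Walk.cons (adj_inl hne) .nil) (path2 _)
    simp only [SimpleGraph.Walk.support_cons, SimpleGraph.Walk.support_nil,
      List.mem_cons, List.mem_singleton, List.not_mem_nil, or_false] at hw
    rcases hw with rfl | rfl
    · exact lt_irrefl _ hlt
    · simp only at hij; rw [hij] at hlt; exact lt_irrefl _ hlt
  have hinjr : Function.Injective (fun i : Fin n => f (Sum.inr i)) := by
    intro i j hij
    by_contra hne
    obtain ⟨w, hw, hlt⟩ := hr (Sum.inr i) (Sum.inr j) (by simp [hne]) hij
      (SimpleGraph.Walk.cons (adj_inr hne) .nil) (path2 _)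
    simp only [SimpleGraph.Walk.support_cons, SimpleGraph.Walk.support_nil,
      List.mem_cons, List.mem_singleton, List.not_mem_nil, or_false] at hw
    rcases hw with rfl | rfl
    · exact lt_irrefl _ hlt
    · simp only at hij; rw [hij] at hlt; exact lt_irrefl _ hlt
  have h0n : 0 < n := by omega
  have h1n : n - 1 < n := by omega
  obtain ⟨a, ha⟩ := key _ hinjl (fun i => hb (Sum.inl i))
  obtain ⟨b, hbv⟩ := key _ hinjr (fun i => hb (Sum.inr i))
  -- build a path from `Sum.inl a` to `Sum.inr b`
  have hcross : (twoCliques n).Adj (Sum.inl (⟨0, h0n⟩ : Fin n))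
      (Sum.inr (⟨n - 1, h1n⟩ : Fin n)) := adj_cross (by omega)
  have contra : ∀ (p : (twoCliques n).Walk (Sum.inl a) (Sum.inr b)), p.IsPath → False := by
    intro p hp
    obtain ⟨w, hw, hlt⟩ := hr (Sum.inl a) (Sum.inr b) (by simp) (ha.trans hbv.symm) p hp
    have := (hb w).2
    omega
  by_cases haz : a = (⟨0, h0n⟩ : Fin n) <;>
    by_cases hbl : b = (⟨n - 1, h1n⟩ : Fin n)
  · have h1 : (twoCliques n).Adj (Sum.inl a) (Sum.inr b) := by rw [haz, hbl]; exact hcross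
    exact contra (SimpleGraph.Walk.cons h1 .nil) (path2 _)
  · have hbl' : (⟨n - 1, h1n⟩ : Fin n) ≠ b := fun h => hbl h.symm
    have h1 : (twoCliques n).Adj (Sum.inl a) (Sum.inr ⟨n - 1, h1n⟩) := by
      rw [haz]; exact hcross
    refine contra (SimpleGraph.Walk.cons h1
      (SimpleGraph.Walk.cons (adj_inr hbl') .nil)) ?_
    simp [SimpleGraph.Walk.isPath_def, hbl']
  · have h2 : (twoCliques n).Adj (Sum.inl ⟨0, h0n⟩) (Sum.inr b) := by
      rw [hbl]; exact hcross
    refine contra (SimpleGraph.Walk.cons (adj_inl haz)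
      (SimpleGraph.Walk.cons h2 .nil)) ?_
    simp [SimpleGraph.Walk.isPath_def, haz]
  · have hbl' : (⟨n - 1, h1n⟩ : Fin n) ≠ b := fun h => hbl h.symm
    refine contra (SimpleGraph.Walk.cons (adj_inl haz)
      (SimpleGraph.Walk.cons hcross
        (SimpleGraph.Walk.cons (adj_inr hbl') .nil))) ?_
    simp [SimpleGraph.Walk.isPath_def, haz, hbl']


/-- for every integer `n ≥ 2`, the rank number of `G_n`, two disjoint
copies of `K_n` joined by a single edge, equals `n + 1`. -/
theorem rankNumber_twoCliques (n : ℕ) (hn : 2 ≤ n) :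
    rankNumber (twoCliques n) = n + 1 := by
  rw [rankNumber]
  apply le_antisymm
  · exact Nat.sInf_le (upper n hn)
  · exact le_csInf ⟨n + 1, upper n hn⟩ (by rintro k ⟨f, hf⟩; exact lower n k hn f hf)
end
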